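/- arXiv:1303.5242 — 7 statements merged into one kernel-verified Lean document; each statement's English description precedes it below -/
import Mathlib

section
/- If {q_k} is a sequence of points in a domain Ω ⊆ C^n such that the balls B(q_k, c·δ̂(q_k)) are pairwise disjoint for some c ∈ (0, 1/2), then for any a, α > 0 the series ∑_k exp(-a·δ̂(q_k)^{-α}) converges. -/
open Metric MeasureTheory Filter

lemma packing_card {m : ℕ} (p : ℕ → EuclideanSpace ℝ (Fin m)) (s : Finset ℕ) (r R : ℝ)
    (hr : 0 < r) (hR : 0 < R)
    (hsub : ∀ k ∈ s, Metric.ball (p k) r ⊆ Metric.ball 0 R)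
    (hdisj : Set.Pairwise ↑s fun k l => Disjoint (Metric.ball (p k) r) (Metric.ball (p l) r)) :
    (s.card : ℝ) ≤ (R / r) ^ m := by
  set μ : Measure (EuclideanSpace ℝ (Fin m)) := volume
  have hV0 : 0 < μ (Metric.ball 0 1) := measure_ball_pos _ _ one_pos
  have hVt : μ (Metric.ball (0 : EuclideanSpace ℝ (Fin m)) 1) < ⊤ := measure_ball_lt_top
  have key : ∑ k ∈ s, μ (Metric.ball (p k) r) ≤ μ (Metric.ball 0 R) := by
    rw [← measure_biUnion_finset hdisj (fun k _ => measurableSet_ball)]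
    exact measure_mono (Set.iUnion₂_subset hsub)
  have hball : ∀ k, μ (Metric.ball (p k) r)
      = ENNReal.ofReal (r ^ m) * μ (Metric.ball 0 1) := by
    intro k
    rw [Measure.addHaar_ball_of_pos μ _ hr, finrank_euclideanSpace_fin]
  have hballR : μ (Metric.ball (0 : EuclideanSpace ℝ (Fin m)) R)
      = ENNReal.ofReal (R ^ m) * μ (Metric.ball 0 1) := by
    rw [Measure.addHaar_ball_of_pos μ _ hR, finrank_euclideanSpace_fin]
  simp only [hball, Finset.sum_const, nsmul_eq_mul, hballR, ← mul_assoc] at key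
  have key2 : (s.card : ENNReal) * ENNReal.ofReal (r ^ m) ≤ ENNReal.ofReal (R ^ m) :=
    (ENNReal.mul_le_mul_iff_left hV0.ne' hVt.ne).mp key
  rw [show (s.card : ENNReal) = ENNReal.ofReal (s.card : ℝ) by simp,
    ← ENNReal.ofReal_mul (by positivity)] at key2
  have key3 : (s.card : ℝ) * r ^ m ≤ R ^ m :=
    (ENNReal.ofReal_le_ofReal_iff (by positivity)).mp key2
  rw [div_pow, le_div_iff₀ (by positivity)]
  exact key3

open Metric

/-- if the balls B(q_k, c·δ̂(q_k)) are pairwise disjoint for some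
0 < c < 1/2, then ∑_k exp(-a·δ̂(q_k)^{-α}) < ∞ for all a, α > 0. -/
theorem summable_exp_neg_rpow_deltaHat {n : ℕ} (Ω : Set (EuclideanSpace ℂ (Fin n)))
    (hΩopen : IsOpen Ω) (hΩconn : IsConnected Ω) (hΩc : Ωᶜ.Nonempty)
    (δhat : EuclideanSpace ℂ (Fin n) → ℝ)
    (hδhat : ∀ z, δhat z = min (Metric.infDist z Ωᶜ) ((Real.sqrt (1 + ‖z‖ ^ 2))⁻¹))
    (q : ℕ → EuclideanSpace ℂ (Fin n)) (hq : ∀ k, q k ∈ Ω)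
    (c : ℝ) (hc0 : 0 < c) (hc : c < 1 / 2)
    (hdisj : Pairwise fun k l =>
      Disjoint (Metric.ball (q k) (c * δhat (q k))) (Metric.ball (q l) (c * δhat (q l))))
    (a α : ℝ) (ha : 0 < a) (hα : 0 < α) :
    Summable fun k => Real.exp (-a * δhat (q k) ^ (-α)) := by
  -- basic positivity and size facts about δhat at the points q k
  have hd_pos : ∀ k, 0 < δhat (q k) := by
    intro k
    rw [hδhat]
    refine lt_min ?_ (by positivity)
    exact (hΩopen.isClosed_compl.notMem_iff_infDist_pos hΩc).mp (by simp [hq k])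
  have hsqrt1 : ∀ z : EuclideanSpace ℂ (Fin n), (1:ℝ) ≤ Real.sqrt (1 + ‖z‖ ^ 2) := by
    intro z
    have h := Real.sqrt_le_sqrt (show (1:ℝ) ≤ 1 + ‖z‖ ^ 2 by nlinarith [sq_nonneg ‖z‖])
    simpa using h
  have hd_le_one : ∀ k, δhat (q k) ≤ 1 := by
    intro k
    rw [hδhat]
    refine (min_le_right _ _).trans ?_
    rw [inv_le_one_iff₀]
    right; exact hsqrt1 _
  have hnorm : ∀ k, ‖q k‖ ≤ (δhat (q k))⁻¹ := by
    intro k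
    have h1 : ‖q k‖ ≤ Real.sqrt (1 + ‖q k‖ ^ 2) := by
      nlinarith [Real.sq_sqrt (show (0:ℝ) ≤ 1 + ‖q k‖ ^ 2 by positivity),
        Real.sqrt_nonneg (1 + ‖q k‖ ^ 2)]
    have h2 : δhat (q k) ≤ (Real.sqrt (1 + ‖q k‖ ^ 2))⁻¹ := by
      rw [hδhat]; exact min_le_right _ _
    have h3 : Real.sqrt (1 + ‖q k‖ ^ 2) ≤ (δhat (q k))⁻¹ := by
      rw [← inv_inv (Real.sqrt _)]
      exact inv_anti₀ (hd_pos k) h2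
    exact h1.trans h3
  -- the dyadic index
  set j : ℕ → ℕ := fun k => Nat.floor (Real.logb 2 (δhat (q k))⁻¹) with hj_def
  have hx1 : ∀ k, (1:ℝ) ≤ (δhat (q k))⁻¹ := by
    intro k
    rw [le_inv_comm₀ one_pos (hd_pos k)]
    simpa using hd_le_one k
  have hlogb_nonneg : ∀ k, 0 ≤ Real.logb 2 (δhat (q k))⁻¹ := fun k =>
    Real.logb_nonneg one_lt_two (hx1 k)
  have hj_up : ∀ k, (2:ℝ) ^ (j k) ≤ (δhat (q k))⁻¹ := by
    intro k
    have h1 : ((j k : ℝ)) ≤ Real.logb 2 (δhat (q k))⁻¹ := Nat.floor_le (hlogb_nonneg k)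
    calc (2:ℝ) ^ (j k) = (2:ℝ) ^ ((j k : ℕ) : ℝ) := (Real.rpow_natCast 2 (j k)).symm
      _ ≤ (2:ℝ) ^ Real.logb 2 (δhat (q k))⁻¹ :=
          Real.rpow_le_rpow_of_exponent_le one_le_two h1
      _ = (δhat (q k))⁻¹ := Real.rpow_logb two_pos (by norm_num) (inv_pos.mpr (hd_pos k))
  have hj_low : ∀ k, (δhat (q k))⁻¹ < (2:ℝ) ^ (j k + 1) := by
    intro k
    have h1 : Real.logb 2 (δhat (q k))⁻¹ < (j k : ℝ) + 1 := Nat.lt_floor_add_one _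
    calc (δhat (q k))⁻¹ = (2:ℝ) ^ Real.logb 2 (δhat (q k))⁻¹ :=
          (Real.rpow_logb two_pos (by norm_num) (inv_pos.mpr (hd_pos k))).symm
      _ < (2:ℝ) ^ (((j k : ℝ)) + 1) := Real.rpow_lt_rpow_of_exponent_lt one_lt_two h1
      _ = (2:ℝ) ^ (j k + 1) := by
          rw [show ((j k : ℝ) + 1) = ((j k + 1 : ℕ) : ℝ) by push_cast; ring,
            Real.rpow_natCast]
  -- the growth base
  set b : ℝ := (2:ℝ) ^ α with hb_def
  have hb1 : 1 < b := Real.one_lt_rpow_iff_of_pos two_pos |>.mpr (Or.inl ⟨one_lt_two, hα⟩)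
  have hb0 : 0 < b := lt_trans one_pos hb1
  -- pointwise bound on the summand
  have hf_le : ∀ k, Real.exp (-a * δhat (q k) ^ (-α)) ≤ Real.exp (-a * b ^ (j k)) := by
    intro k
    apply Real.exp_le_exp.mpr
    have hbj : b ^ (j k) ≤ δhat (q k) ^ (-α) := by
      have h1 : ((2:ℝ) ^ (j k)) ^ α ≤ ((δhat (q k))⁻¹) ^ α :=
        Real.rpow_le_rpow (by positivity) (hj_up k) hα.le
      have h2 : b ^ (j k) = ((2:ℝ) ^ (j k)) ^ α := by
        rw [← Real.rpow_natCast b (j k), hb_def, ← Real.rpow_natCast (2:ℝ) (j k),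
          ← Real.rpow_mul (by norm_num), ← Real.rpow_mul (by norm_num), mul_comm]
      have h3 : ((δhat (q k))⁻¹) ^ α = δhat (q k) ^ (-α) := by
        rw [Real.inv_rpow (hd_pos k).le, ← Real.rpow_neg (hd_pos k).le]
      rw [h2, ← h3]
      exact h1
    nlinarith [hbj, ha]
  -- the isometry to a real Euclidean space
  set m : ℕ := Module.finrank ℝ (EuclideanSpace ℂ (Fin n)) with hm_def
  set e : EuclideanSpace ℂ (Fin n) ≃ₗᵢ[ℝ] EuclideanSpace ℝ (Fin m) :=
    (stdOrthonormalBasis ℝ (EuclideanSpace ℂ (Fin n))).repr with he_def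
  -- cardinality bound on each dyadic fiber
  have hcard : ∀ (N i : ℕ),
      ((((Finset.range N).filter (fun k => j k = i)).card : ℝ))
        ≤ (2 / c) ^ m * ((4:ℝ) ^ m) ^ (i + 1) := by
    intro N i
    set s := (Finset.range N).filter (fun k => j k = i) with hs_def
    set r : ℝ := c * ((2:ℝ) ^ (i + 1))⁻¹ with hr_def
    set R : ℝ := (2:ℝ) ^ (i + 1) + r with hR_def
    have hr0 : 0 < r := by positivity
    have hR0 : 0 < R := by positivity
    have hrd : ∀ k ∈ s, r ≤ c * δhat (q k) := by
      intro k hk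
      have hki : j k = i := by
        simpa [hs_def] using (Finset.mem_filter.mp hk).2
      have := hj_low k
      rw [hki] at this
      have hd : ((2:ℝ) ^ (i + 1))⁻¹ ≤ δhat (q k) := by
        rw [inv_le_comm₀ (by positivity) (hd_pos k)]
        exact this.le
      exact mul_le_mul_of_nonneg_left hd hc0.le
    have hnormk : ∀ k ∈ s, ‖q k‖ ≤ (2:ℝ) ^ (i + 1) := by
      intro k hk
      have hki : j k = i := by
        simpa [hs_def] using (Finset.mem_filter.mp hk).2
      have := hj_low k
      rw [hki] at this
      exact (hnorm k).trans this.le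
    have hsub : ∀ k ∈ s, Metric.ball (e (q k)) r ⊆ Metric.ball 0 R := by
      intro k hk
      apply Metric.ball_subset_ball'
      have : dist (e (q k)) 0 = ‖q k‖ := by
        rw [dist_zero_right, e.norm_map]
      rw [this, hR_def]
      linarith [hnormk k hk]
    have hdisj2 : Set.Pairwise ↑s fun k l =>
        Disjoint (Metric.ball (e (q k)) r) (Metric.ball (e (q l)) r) := by
      intro k hk l hl hkl
      rw [Set.disjoint_left]
      intro y hyk hyl
      have hmem : ∀ i' ∈ s, y ∈ Metric.ball (e (q i')) r →
          e.symm y ∈ Metric.ball (q i') (c * δhat (q i')) := by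
        intro i' hi' hy
        rw [Metric.mem_ball] at hy ⊢
        calc dist (e.symm y) (q i') = dist (e.symm y) (e.symm (e (q i'))) := by
              rw [e.symm_apply_apply]
          _ = dist y (e (q i')) := e.symm.dist_map y (e (q i'))
          _ < r := hy
          _ ≤ c * δhat (q i') := hrd i' hi'
      exact Set.disjoint_left.mp (hdisj hkl) (hmem k hk hyk) (hmem l hl hyl)
    have hpack := packing_card (fun k => e (q k)) s r R hr0 hR0 hsub hdisj2
    refine hpack.trans ?_
    have hRr : R / r ≤ (2 / c) * (4:ℝ) ^ (i + 1) := by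
      rw [hR_def, hr_def, div_le_iff₀ (by positivity)]
      have h4 : ((4:ℝ)) ^ (i + 1) = (2:ℝ) ^ (i + 1) * (2:ℝ) ^ (i + 1) := by
        rw [← mul_pow]; norm_num
      have h2i : (1:ℝ) ≤ (2:ℝ) ^ (i + 1) := one_le_pow₀ one_le_two
      have hinv : ((2:ℝ) ^ (i + 1))⁻¹ ≤ 1 := inv_le_one_of_one_le₀ h2i
      have hc1 : c ≤ 1 := by linarith
      calc (2:ℝ) ^ (i + 1) + c * ((2:ℝ) ^ (i + 1))⁻¹
          ≤ (2:ℝ) ^ (i + 1) + 1 := by nlinarith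
        _ ≤ 2 * (2:ℝ) ^ (i + 1) := by linarith
        _ = 2 / c * (4:ℝ) ^ (i + 1) * (c * ((2:ℝ) ^ (i + 1))⁻¹) := by
            rw [h4]
            field_simp
    calc (R / r) ^ m ≤ ((2 / c) * (4:ℝ) ^ (i + 1)) ^ m :=
          pow_le_pow_left₀ (by positivity) hRr m
      _ = (2 / c) ^ m * ((4:ℝ) ^ m) ^ (i + 1) := by
          rw [mul_pow, ← pow_mul, ← pow_mul, Nat.mul_comm]
  -- the dominating series
  set g : ℕ → ℝ := fun i => (2 / c) ^ m * ((4:ℝ) ^ m) ^ (i + 1) * Real.exp (-a * b ^ i)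
    with hg_def
  have hg_nonneg : ∀ i, 0 ≤ g i := by
    intro i; rw [hg_def]; positivity
  have hg_sum : Summable g := by
    apply summable_of_ratio_norm_eventually_le (r := 1/2) (by norm_num)
    have htend : Tendsto (fun i : ℕ => (4:ℝ) ^ m * Real.exp (-(a * (b - 1)) * b ^ i))
        atTop (nhds 0) := by
      rw [show (0:ℝ) = (4:ℝ) ^ m * 0 by ring]
      apply Tendsto.const_mul
      apply Real.tendsto_exp_atBot.comp
      apply Filter.Tendsto.const_mul_atTop_of_neg (by nlinarith : -(a * (b - 1)) < 0)
      exact tendsto_pow_atTop_atTop_of_one_lt hb1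
    have hev : ∀ᶠ i : ℕ in atTop,
        (4:ℝ) ^ m * Real.exp (-(a * (b - 1)) * b ^ i) < 1/2 :=
      htend.eventually_lt_const (by norm_num)
    filter_upwards [hev] with i hi
    rw [Real.norm_of_nonneg (hg_nonneg _), Real.norm_of_nonneg (hg_nonneg _), hg_def]
    simp only
    have hexp : Real.exp (-a * b ^ (i + 1))
        = Real.exp (-a * b ^ i) * Real.exp (-(a * (b - 1)) * b ^ i) := by
      rw [← Real.exp_add]
      congr 1
      ring
    rw [hexp]
    have h1 : ((4:ℝ) ^ m) ^ (i + 1 + 1) = (4:ℝ) ^ m * ((4:ℝ) ^ m) ^ (i + 1) := by ring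
    rw [h1]
    have h2 : (0:ℝ) ≤ (2 / c) ^ m * ((4:ℝ) ^ m) ^ (i + 1) * Real.exp (-a * b ^ i) := by
      positivity
    calc (2 / c) ^ m * ((4:ℝ) ^ m * ((4:ℝ) ^ m) ^ (i + 1))
          * (Real.exp (-a * b ^ i) * Real.exp (-(a * (b - 1)) * b ^ i))
        = ((2 / c) ^ m * ((4:ℝ) ^ m) ^ (i + 1) * Real.exp (-a * b ^ i))
          * ((4:ℝ) ^ m * Real.exp (-(a * (b - 1)) * b ^ i)) := by ring
      _ ≤ ((2 / c) ^ m * ((4:ℝ) ^ m) ^ (i + 1) * Real.exp (-a * b ^ i)) * (1/2) :=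
          mul_le_mul_of_nonneg_left hi.le h2
      _ = 1/2 * ((2 / c) ^ m * ((4:ℝ) ^ m) ^ (i + 1) * Real.exp (-a * b ^ i)) := by ring
  -- conclude via bounded partial sums
  apply summable_of_sum_range_le (c := ∑' i, g i) (fun k => (Real.exp_pos _).le)
  intro N
  set M : ℕ := ((Finset.range N).sup j) + 1 with hM_def
  have hmaps : ∀ k ∈ Finset.range N, j k ∈ Finset.range M := by
    intro k hk
    rw [Finset.mem_range, hM_def]
    exact Nat.lt_succ_of_le (Finset.le_sup hk)
  rw [← Finset.sum_fiberwise_of_maps_to hmaps (fun k => Real.exp (-a * δhat (q k) ^ (-α)))]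
  have hstep : ∀ i ∈ Finset.range M,
      ∑ k ∈ (Finset.range N).filter (fun k => j k = i),
        Real.exp (-a * δhat (q k) ^ (-α)) ≤ g i := by
    intro i _
    calc ∑ k ∈ (Finset.range N).filter (fun k => j k = i),
          Real.exp (-a * δhat (q k) ^ (-α))
        ≤ ∑ k ∈ (Finset.range N).filter (fun k => j k = i), Real.exp (-a * b ^ i) := by
          apply Finset.sum_le_sum
          intro k hk
          have hki : j k = i := by simpa using (Finset.mem_filter.mp hk).2
          rw [← hki]
          exact hf_le k
      _ = (((Finset.range N).filter (fun k => j k = i)).card : ℝ) * Real.exp (-a * b ^ i) := by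
          rw [Finset.sum_const, nsmul_eq_mul]
      _ ≤ (2 / c) ^ m * ((4:ℝ) ^ m) ^ (i + 1) * Real.exp (-a * b ^ i) :=
          mul_le_mul_of_nonneg_right (hcard N i) (Real.exp_pos _).le
      _ = g i := rfl
  calc ∑ i ∈ Finset.range M, ∑ k ∈ (Finset.range N).filter (fun k => j k = i),
        Real.exp (-a * δhat (q k) ^ (-α))
      ≤ ∑ i ∈ Finset.range M, g i := Finset.sum_le_sum hstep
    _ ≤ ∑' i, g i := Summable.sum_le_tsum _ (fun i _ => hg_nonneg i) hg_sum
end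

section
/- Let t_1 = 1 - e^{-2} and t_{j+1} = t_j + (1 - t_j)·|log(1 - t_j)|^{-1}. Then {t_j} is an increasing sequence in (0,1) and t_j → 1 as j → ∞. -/
open Filter

lemma seq_key (x : ℝ) (hx1 : 1 - Real.exp (-2) ≤ x) (hx2 : x < 1) :
    0 < (1 - x) * |Real.log (1 - x)|⁻¹ ∧
      x + (1 - x) * |Real.log (1 - x)|⁻¹ < 1 := by
  have hu0 : 0 < 1 - x := by linarith
  have hue : 1 - x ≤ Real.exp (-2) := by linarith
  have hlog : Real.log (1 - x) ≤ -2 := by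
    calc Real.log (1 - x) ≤ Real.log (Real.exp (-2)) := Real.log_le_log hu0 hue
    _ = -2 := Real.log_exp _
  have habs : |Real.log (1 - x)| = -Real.log (1 - x) := abs_of_neg (by linarith)
  have h2 : (2:ℝ) ≤ |Real.log (1 - x)| := by rw [habs]; linarith
  have hpos : 0 < |Real.log (1 - x)| := by linarith
  have hinv : |Real.log (1 - x)|⁻¹ ≤ 2⁻¹ := by
    exact inv_anti₀ (by norm_num) h2
  have hinvpos : 0 < |Real.log (1 - x)|⁻¹ := inv_pos.2 hpos
  constructor
  · positivity
  · have : (1 - x) * |Real.log (1 - x)|⁻¹ ≤ (1 - x) * 2⁻¹ :=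
      mul_le_mul_of_nonneg_left hinv (le_of_lt hu0)
    nlinarith

lemma seq_lb (c x : ℝ) (hc1 : 1 - Real.exp (-2) ≤ c) (hc2 : c < 1)
    (hx1 : 1 - Real.exp (-2) ≤ x) (hxc : x ≤ c) :
    (1 - c) * |Real.log (1 - c)|⁻¹ ≤ (1 - x) * |Real.log (1 - x)|⁻¹ := by
  have hx2 : x < 1 := lt_of_le_of_lt hxc hc2
  have hu0 : 0 < 1 - x := by linarith
  have hc0 : 0 < 1 - c := by linarith
  have hlogx : Real.log (1 - x) ≤ -2 := by
    calc Real.log (1 - x) ≤ Real.log (Real.exp (-2)) :=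
      Real.log_le_log hu0 (by linarith)
    _ = -2 := Real.log_exp _
  have hlogc : Real.log (1 - c) ≤ -2 := by
    calc Real.log (1 - c) ≤ Real.log (Real.exp (-2)) :=
      Real.log_le_log hc0 (by linarith)
    _ = -2 := Real.log_exp _
  have hle : Real.log (1 - c) ≤ Real.log (1 - x) := Real.log_le_log hc0 (by linarith)
  have habsx : |Real.log (1 - x)| = -Real.log (1 - x) := abs_of_neg (by linarith)
  have habsc : |Real.log (1 - c)| = -Real.log (1 - c) := abs_of_neg (by linarith)
  have hxpos : 0 < |Real.log (1 - x)| := by rw [habsx]; linarith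
  have hcpos : 0 < |Real.log (1 - c)| := by rw [habsc]; linarith
  have hAB : |Real.log (1 - x)| ≤ |Real.log (1 - c)| := by
    rw [habsx, habsc]; linarith
  have hinv : |Real.log (1 - c)|⁻¹ ≤ |Real.log (1 - x)|⁻¹ :=
    inv_anti₀ hxpos hAB
  exact mul_le_mul (by linarith) hinv (inv_pos.2 hcpos).le hu0.le

/-- t₁ = 1 - e⁻², t_{j+1} = t_j + (1-t_j)|log(1-t_j)|⁻¹ is an
increasing sequence in (0,1) converging to 1. -/
theorem seq_increasing_tendsto_one (t : ℕ → ℝ)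
    (h1 : t 1 = 1 - Real.exp (-2))
    (hrec : ∀ j ≥ 1, t (j + 1) = t j + (1 - t j) * |Real.log (1 - t j)|⁻¹) :
    (∀ j ≥ 1, t j ∈ Set.Ioo (0 : ℝ) 1) ∧ (∀ j ≥ 1, t j < t (j + 1)) ∧
      Tendsto t atTop (nhds 1) := by
  have he : Real.exp (-2) < 1 := by
    rw [Real.exp_lt_one_iff]; norm_num
  have he0 : (0:ℝ) < Real.exp (-2) := Real.exp_pos _
  have hmem : ∀ j, 1 ≤ j → 1 - Real.exp (-2) ≤ t j ∧ t j < 1 := by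
    intro j hj
    induction j, hj using Nat.le_induction with
    | base => rw [h1]; exact ⟨le_refl _, by linarith⟩
    | succ n hn ih =>
      obtain ⟨hl, hu⟩ := ih
      rw [hrec n hn]
      have hk := seq_key (t n) hl hu
      exact ⟨by linarith [hk.1], hk.2⟩
  have hinc : ∀ j ≥ 1, t j < t (j + 1) := by
    intro j hj
    rw [hrec j hj]
    have hk := (seq_key (t j) (hmem j hj).1 (hmem j hj).2).1
    linarith
  have hmono : ∀ j k, 1 ≤ j → j ≤ k → t j ≤ t k := by
    intro j k hj hjk
    induction k, hjk using Nat.le_induction with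
    | base => exact le_refl _
    | succ n hn ih => exact ih.trans (hinc n (le_trans hj hn)).le
  refine ⟨?_, hinc, ?_⟩
  · intro j hj
    obtain ⟨hl, hu⟩ := hmem j hj
    exact ⟨by linarith, hu⟩
  · rw [tendsto_order]
    constructor
    · intro a ha
      set c := max a (t 1) with hc
      have hc1 : 1 - Real.exp (-2) ≤ c := h1 ▸ le_max_right _ _
      have hc2 : c < 1 := max_lt ha (by rw [h1]; linarith)
      set δ := (1 - c) * |Real.log (1 - c)|⁻¹ with hδdef
      have hδ : 0 < δ := (seq_key c hc1 hc2).1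
      have grow : ∀ n : ℕ, (∃ j, 1 ≤ j ∧ c < t j) ∨ t 1 + n * δ ≤ t (n + 1) := by
        intro n
        induction n with
        | zero => right; simp
        | succ n ih =>
          rcases ih with h | h
          · exact Or.inl h
          · by_cases hcase : c < t (n + 1)
            · exact Or.inl ⟨n + 1, by omega, hcase⟩
            · right
              push_neg at hcase
              have hl := (hmem (n + 1) (by omega)).1
              have hlb := seq_lb c (t (n + 1)) hc1 hc2 hl hcase
              rw [hrec (n + 1) (by omega)]
              push_cast
              linarith
      obtain ⟨n, hn⟩ := exists_nat_gt ((c - t 1) / δ)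
      have hn' : c - t 1 < n * δ := by
        have := (div_lt_iff₀ hδ).mp hn
        linarith
      have hex : ∃ j, 1 ≤ j ∧ c < t j := by
        rcases grow n with h | h
        · exact h
        · exact ⟨n + 1, by omega, by linarith⟩
      obtain ⟨j, hj, hcj⟩ := hex
      filter_upwards [eventually_ge_atTop j] with k hk
      exact lt_of_le_of_lt (le_max_left _ _) (lt_of_lt_of_le hcj (hmono j k hj hk))
    · intro a ha
      filter_upwards [eventually_ge_atTop 1] with k hk
      linarith [(hmem k hk).2]
end

section
/- With t_j as above (t_1 = 1 - e^{-2}, t_{j+1} = t_j + (1-t_j)|log(1-t_j)|^{-1}), the quantity |t_{j+1} - t_j| / |1 - t_j t_{j+1}| tends to 0 as j → ∞. -/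
open Filter

/-- with t₁ = 1 - e⁻², t_{j+1} = t_j + (1-t_j)|log(1-t_j)|⁻¹, the
quantity |t_{j+1} - t_j| / |1 - t j t_{j+1}| tends to 0. -/
theorem pseudohyperbolic_ratio_tendsto_zero (t : ℕ → ℝ)
    (h1 : t 1 = 1 - Real.exp (-2))
    (hrec : ∀ j ≥ 1, t (j + 1) = t j + (1 - t j) * |Real.log (1 - t j)|⁻¹) :
    Tendsto (fun j => |t (j + 1) - t j| / |1 - t j * t (j + 1)|) atTop (nhds 0) := by
  have key : ∀ j, 1 ≤ j → 0 < t j ∧ 0 < 1 - t j ∧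
      Real.sqrt (2 * j + 2) ≤ -Real.log (1 - t j) := by
    intro j hj
    induction j, hj using Nat.le_induction with
    | base =>
      have he : Real.exp (-2) < 1 := by
        rw [Real.exp_lt_one_iff]; norm_num
      have he0 := Real.exp_pos (-2)
      refine ⟨by rw [h1]; linarith, by rw [h1]; linarith, ?_⟩
      have h2 : (1 : ℝ) - t 1 = Real.exp (-2) := by rw [h1]; ring
      rw [h2, Real.log_exp]
      have h4 : Real.sqrt (2 * (1:ℕ) + 2) = 2 := by
        push_cast
        rw [show (2:ℝ) * 1 + 2 = 2 ^ 2 by norm_num, Real.sqrt_sq (by norm_num)]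
      rw [h4]; norm_num
    | succ j hj ih =>
      obtain ⟨ht0, hs, hL⟩ := ih
      set s := 1 - t j with hs_def
      set L := -Real.log s with hL_def
      have hL2 : (2:ℝ) ≤ L := by
        refine le_trans ?_ hL
        have h4 : (4:ℝ) ≤ 2 * j + 2 := by
          have : (1:ℝ) ≤ (j:ℝ) := by exact_mod_cast hj
          linarith
        calc (2:ℝ) = Real.sqrt (2 ^ 2) := by rw [Real.sqrt_sq]; norm_num
          _ ≤ Real.sqrt (2 * j + 2) := Real.sqrt_le_sqrt (by norm_num; linarith)
      have hLpos : (0:ℝ) < L := by linarith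
      have habs : |Real.log s| = L := by
        rw [hL_def, abs_of_nonpos (by linarith)]
      have htrec : t (j + 1) = t j + s * L⁻¹ := by
        rw [hrec j hj, ← hs_def, habs]
      have hinv : L⁻¹ ≤ 1 / 2 := by
        rw [inv_le_iff_one_le_mul₀ hLpos] at *
        · linarith
      have hinvpos : (0:ℝ) < L⁻¹ := inv_pos.mpr hLpos
      have hfac : (0:ℝ) < 1 - L⁻¹ := by linarith
      have hsnew : 1 - t (j + 1) = s * (1 - L⁻¹) := by
        rw [htrec]; ring
      have hsnewpos : 0 < 1 - t (j + 1) := by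
        rw [hsnew]; exact mul_pos hs hfac
      refine ⟨?_, hsnewpos, ?_⟩
      · rw [htrec]
        have := mul_pos hs hinvpos
        linarith
      · have hlog : Real.log (1 - t (j + 1)) = Real.log s + Real.log (1 - L⁻¹) := by
          rw [hsnew, Real.log_mul (ne_of_gt hs) (ne_of_gt hfac)]
        have hle : Real.log (1 - L⁻¹) ≤ -L⁻¹ := by
          have := Real.log_le_sub_one_of_pos hfac
          linarith
        have hLL : L + L⁻¹ ≤ -Real.log (1 - t (j + 1)) := by
          rw [hlog]; rw [hL_def] at *; linarith
        refine le_trans ?_ hLL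
        have hLsq : (2 * j + 2 : ℝ) ≤ L ^ 2 := by
          have h1' : Real.sqrt (2 * j + 2) ^ 2 ≤ L ^ 2 := by
            apply pow_le_pow_left₀ (Real.sqrt_nonneg _) hL
          rwa [Real.sq_sqrt (by positivity)] at h1'
        have hLinv : L * L⁻¹ = 1 := mul_inv_cancel₀ (ne_of_gt hLpos)
        have hsq : (2 * ((j:ℝ) + 1) + 2) ≤ (L + L⁻¹) ^ 2 := by
          nlinarith [sq_nonneg (L⁻¹)]
        calc Real.sqrt (2 * ↑(j + 1) + 2) = Real.sqrt (2 * ((j:ℝ) + 1) + 2) := by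
              push_cast; ring_nf
          _ ≤ Real.sqrt ((L + L⁻¹) ^ 2) := Real.sqrt_le_sqrt hsq
          _ = L + L⁻¹ := Real.sqrt_sq (by positivity)
  have bound : ∀ j, 1 ≤ j →
      |t (j + 1) - t j| / |1 - t j * t (j + 1)| ≤ (Real.sqrt (2 * j + 2))⁻¹ := by
    intro j hj
    obtain ⟨ht0, hs, hL⟩ := key j hj
    set s := 1 - t j with hs_def
    set L := -Real.log s with hL_def
    have hL2 : (2:ℝ) ≤ L := by
      refine le_trans ?_ hL
      have : (1:ℝ) ≤ (j:ℝ) := by exact_mod_cast hj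
      calc (2:ℝ) = Real.sqrt (2 ^ 2) := by rw [Real.sqrt_sq]; norm_num
        _ ≤ Real.sqrt (2 * j + 2) := Real.sqrt_le_sqrt (by norm_num; linarith)
    have hLpos : (0:ℝ) < L := by linarith
    have habs : |Real.log s| = L := by
      rw [hL_def, abs_of_nonpos (by linarith)]
    have htrec : t (j + 1) = t j + s * L⁻¹ := by
      rw [hrec j hj, ← hs_def, habs]
    have hinv : L⁻¹ ≤ 1 / 2 := by
      rw [inv_le_iff_one_le_mul₀ hLpos]; linarith
    have hinvpos : (0:ℝ) < L⁻¹ := inv_pos.mpr hLpos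
    have hnum : t (j + 1) - t j = s * L⁻¹ := by rw [htrec]; ring
    have hnumpos : 0 < t (j + 1) - t j := by
      rw [hnum]; exact mul_pos hs hinvpos
    have hden : 1 - t j * t (j + 1) = s * (1 + t j * (1 - L⁻¹)) := by
      rw [htrec, hs_def]; ring
    have hdenge : s ≤ 1 - t j * t (j + 1) := by
      rw [hden]
      nlinarith [mul_nonneg (le_of_lt ht0) (by linarith : (0:ℝ) ≤ 1 - L⁻¹)]
    have hdenpos : 0 < 1 - t j * t (j + 1) := lt_of_lt_of_le hs hdenge
    have hsqrtpos : 0 < Real.sqrt (2 * j + 2) := Real.sqrt_pos.mpr (by positivity)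
    calc |t (j + 1) - t j| / |1 - t j * t (j + 1)|
        = (s * L⁻¹) / (1 - t j * t (j + 1)) := by
          rw [abs_of_pos hnumpos, abs_of_pos hdenpos, hnum]
      _ ≤ (s * L⁻¹) / s := by
          gcongr
      _ = L⁻¹ := by
          rw [mul_comm, mul_div_assoc, div_self (ne_of_gt hs), mul_one]
      _ ≤ (Real.sqrt (2 * j + 2))⁻¹ := by
          gcongr
  have htend : Tendsto (fun j : ℕ => (Real.sqrt (2 * j + 2))⁻¹) atTop (nhds 0) := by
    apply Tendsto.inv_tendsto_atTop
    apply tendsto_atTop_atTop_of_monotone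
    · intro a b hab
      apply Real.sqrt_le_sqrt
      have : (a:ℝ) ≤ (b:ℝ) := by exact_mod_cast hab
      linarith
    · intro b
      refine ⟨⌈b ^ 2⌉₊, ?_⟩
      have h1' : b ^ 2 ≤ (⌈b ^ 2⌉₊ : ℝ) := Nat.le_ceil _
      calc b ≤ |b| := le_abs_self b
        _ = Real.sqrt (b ^ 2) := (Real.sqrt_sq_eq_abs b).symm
        _ ≤ Real.sqrt (2 * ⌈b ^ 2⌉₊ + 2) := Real.sqrt_le_sqrt (by have h2 : (0:ℝ) ≤ (⌈b ^ 2⌉₊ : ℝ) := Nat.cast_nonneg _; linarith)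
  apply squeeze_zero' (g := fun j : ℕ => (Real.sqrt (2 * j + 2))⁻¹)
  · filter_upwards with j using by positivity
  · filter_upwards [eventually_ge_atTop 1] with j hj using bound j hj
  · exact htend
end

section
/- With t_j as above, the hyperbolic (Poincaré) distance in the unit disc between t_j and t_{j+1}, namely log((1 + ρ_j)/(1 - ρ_j)) where ρ_j = |t_{j+1} - t_j|/|1 - t_j t_{j+1}|, tends to 0 as j → ∞. -/
open Filter

lemma poincare_aux_inv (t : ℕ → ℝ)
    (h1 : t 1 = 1 - Real.exp (-2))
    (hrec : ∀ j ≥ 1, t (j + 1) = t j + (1 - t j) * |Real.log (1 - t j)|⁻¹) :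
    ∀ j, 1 ≤ j → (1/2 ≤ t j ∧ t j < 1 ∧ 2 ≤ -Real.log (1 - t j) ∧
      2*(j:ℝ) + 2 ≤ (Real.log (1 - t j))^2) := by
  intro j hj
  induction j, hj using Nat.le_induction with
  | base =>
    have he : Real.log (1 - t 1) = -2 := by
      rw [h1]; simp [Real.log_exp]
    have hexp : Real.exp (-2) ≤ 1/2 := by
      have h3 : (3:ℝ) ≤ Real.exp 2 := by
        have := Real.add_one_le_exp (2:ℝ); linarith
      rw [Real.exp_neg]
      rw [inv_le_comm₀ (Real.exp_pos 2) (by norm_num)] at *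
      linarith
    refine ⟨by rw [h1]; linarith, by rw [h1]; have := Real.exp_pos (-2); linarith,
      by rw [he]; norm_num, by rw [he]; norm_num⟩
  | succ j hj ih =>
    obtain ⟨ht2, ht1, hL2, hLsq⟩ := ih
    set s := 1 - t j with hs_def
    set L := -Real.log s with hL_def
    have hs0 : 0 < s := by simp [hs_def]; linarith
    have hlogneg : Real.log s ≤ -2 := by linarith
    have habs : |Real.log (1 - t j)| = L := by
      rw [← hs_def, abs_of_neg (by linarith), hL_def]
    have hLpos : (0:ℝ) < L := by linarith
    have hrecj := hrec j hj
    rw [habs] at hrecj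
    have hsucc : 1 - t (j+1) = s * (1 - L⁻¹) := by
      rw [hrecj]; field_simp; ring
    have hfac : (0:ℝ) < 1 - L⁻¹ := by
      have : L⁻¹ ≤ 1/2 := by
        rw [inv_le_comm₀ hLpos (by norm_num)] at *; linarith
      linarith
    have hs1 : 0 < 1 - t (j+1) := by rw [hsucc]; positivity
    have hlog1 : Real.log (1 - t (j+1)) = Real.log s + Real.log (1 - L⁻¹) := by
      rw [hsucc, Real.log_mul (ne_of_gt hs0) (ne_of_gt hfac)]
    have hle : Real.log (1 - L⁻¹) ≤ -L⁻¹ := by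
      have := Real.log_le_sub_one_of_pos hfac; linarith
    have hL' : L + L⁻¹ ≤ -Real.log (1 - t (j+1)) := by
      rw [hlog1]; rw [hL_def] at *; linarith
    have hLinv_pos : (0:ℝ) < L⁻¹ := by positivity
    constructor
    · have : 0 ≤ s * L⁻¹ := by positivity
      rw [hrecj]; linarith
    refine ⟨by linarith, by linarith, ?_⟩
    have hsq : (L + L⁻¹)^2 ≤ (Real.log (1 - t (j+1)))^2 := by
      have h1' : 0 < L + L⁻¹ := by positivity
      calc (L + L⁻¹)^2 ≤ (-Real.log (1 - t (j+1)))^2 := by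
            apply pow_le_pow_left₀ (le_of_lt h1') hL'
        _ = (Real.log (1 - t (j+1)))^2 := by ring
    have hLL : (Real.log (1 - t j))^2 = L^2 := by rw [hL_def, hs_def]; ring
    rw [hLL] at hLsq
    have hexpand : L^2 + 2 ≤ (L + L⁻¹)^2 := by
      have : (L + L⁻¹)^2 = L^2 + 2 + L⁻¹^2 := by
        field_simp; ring
      nlinarith [sq_nonneg L⁻¹]
    push_cast
    nlinarith

/-- with t_j as in Lemma 5.5, the Poincaré distance
log((1+ρ_j)/(1-ρ_j)), ρ_j = |t_{j+1}-t_j|/|1-t_j t_{j+1}|, tends to 0. -/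
theorem poincare_distance_tendsto_zero (t : ℕ → ℝ)
    (h1 : t 1 = 1 - Real.exp (-2))
    (hrec : ∀ j ≥ 1, t (j + 1) = t j + (1 - t j) * |Real.log (1 - t j)|⁻¹) :
    Tendsto (fun j =>
        Real.log ((1 + |t (j + 1) - t j| / |1 - t j * t (j + 1)|) /
          (1 - |t (j + 1) - t j| / |1 - t j * t (j + 1)|)))
      atTop (nhds 0) := by
  set ρ : ℕ → ℝ := fun j => |t (j + 1) - t j| / |1 - t j * t (j + 1)| with hρ
  have hinv := poincare_aux_inv t h1 hrec
  -- bound: for j ≥ 1, 0 ≤ ρ j ≤ 2 / sqrt j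
  have hbound : ∀ j, 1 ≤ j → ρ j ≤ 2 / Real.sqrt j := by
    intro j hj
    obtain ⟨ht2, ht1, hL2, hLsq⟩ := hinv j hj
    obtain ⟨ht2', ht1', hL2', _⟩ := hinv (j+1) (by omega)
    set s := 1 - t j with hs_def
    set L := -Real.log s with hL_def
    have hs0 : 0 < s := by simp [hs_def]; linarith
    have habs : |Real.log (1 - t j)| = L := by
      rw [← hs_def, abs_of_neg (by linarith), hL_def]
    have hLpos : (0:ℝ) < L := by linarith
    have hrecj := hrec j hj
    rw [habs] at hrecj
    have hnum : |t (j+1) - t j| = s * L⁻¹ := by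
      rw [hrecj]
      have he : t j + s * L⁻¹ - t j = s * L⁻¹ := by ring
      rw [he, abs_of_nonneg (by positivity)]
    have hden_eq : 1 - t j * t (j+1) = (1 - t (j+1)) + t (j+1) * s := by
      rw [hs_def]; ring
    have hdenlb : s / 2 ≤ 1 - t j * t (j+1) := by
      rw [hden_eq]
      have h1' : 0 ≤ 1 - t (j+1) := by linarith
      have h2' : s/2 ≤ t (j+1) * s := by nlinarith
      linarith
    have hdenpos : 0 < 1 - t j * t (j+1) := lt_of_lt_of_le (by positivity) hdenlb
    have habsden : |1 - t j * t (j+1)| = 1 - t j * t (j+1) := abs_of_pos hdenpos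
    have hstep1 : ρ j ≤ 2 / L := by
      rw [hρ]; simp only []
      rw [hnum, habsden]
      rw [div_le_div_iff₀ hdenpos hLpos]
      calc s * L⁻¹ * L = s := by field_simp
        _ ≤ 2 * (1 - t j * t (j+1)) := by linarith
    have hsqrt : Real.sqrt j ≤ L := by
      have h1' : Real.sqrt j ≤ Real.sqrt (L^2) := by
        apply Real.sqrt_le_sqrt; nlinarith [Nat.one_le_iff_ne_zero.mp hj]
      rwa [Real.sqrt_sq (le_of_lt hLpos)] at h1'
    calc ρ j ≤ 2 / L := hstep1
      _ ≤ 2 / Real.sqrt j := by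
          apply div_le_div_of_nonneg_left (by norm_num) ?_ hsqrt
          have : (0:ℝ) < Real.sqrt j := by
            apply Real.sqrt_pos.mpr; exact_mod_cast Nat.pos_of_ne_zero (by omega)
          exact this
  have hρ0 : ∀ j, 0 ≤ ρ j := fun j => by positivity
  have hρtendsto : Tendsto ρ atTop (nhds 0) := by
    apply squeeze_zero' (Eventually.of_forall hρ0)
      (eventually_atTop.mpr ⟨1, hbound⟩)
    have hs : Tendsto (fun j : ℕ => Real.sqrt j) atTop atTop := by
      apply tendsto_atTop_atTop.mpr
      intro b
      refine ⟨⌈b⌉₊^2, fun j hj => ?_⟩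
      calc b ≤ (⌈b⌉₊:ℝ) := Nat.le_ceil b
        _ = Real.sqrt ((⌈b⌉₊:ℝ)^2) := (Real.sqrt_sq (by positivity)).symm
        _ ≤ Real.sqrt j := Real.sqrt_le_sqrt (by exact_mod_cast hj)
    exact Tendsto.div_atTop tendsto_const_nhds hs
  have hdiv : Tendsto (fun j => (1 + ρ j) / (1 - ρ j)) atTop (nhds 1) := by
    have h1' : Tendsto (fun j => 1 + ρ j) atTop (nhds 1) := by
      have := (tendsto_const_nhds : Tendsto (fun _ : ℕ => (1:ℝ)) atTop (nhds 1)).add hρtendsto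
      simpa using this
    have h2' : Tendsto (fun j => 1 - ρ j) atTop (nhds 1) := by
      have := (tendsto_const_nhds : Tendsto (fun _ : ℕ => (1:ℝ)) atTop (nhds 1)).sub hρtendsto
      simpa using this
    have := h1'.div h2' (by norm_num)
    simpa [Pi.div_def] using this
  have hlog : Tendsto (fun j => Real.log ((1 + ρ j) / (1 - ρ j))) atTop (nhds 0) := by
    have := (Real.continuousAt_log (by norm_num : (1:ℝ) ≠ 0)).tendsto.comp hdiv
    simpa [Function.comp_def] using this
  exact hlog
end

section
/- If Ω ⊆ C^n is a domain, f : Ω → C is holomorphic, and the set of Picard points of f on ∂Ω is dense in ∂Ω, then every point of ∂Ω is a Picard point of f. Equivalently, the set of Picard points of f in ∂Ω is closed in ∂Ω. -/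
/-- A point `p` of the boundary of `Ω` is a Picard point of `f` if on every
neighborhood `U` of `p`, the restriction of `f` to `Ω ∩ U` attains every complex
value infinitely often, with at most one exception. -/
def IsPicardPoint {n : ℕ} (Ω : Set (EuclideanSpace ℂ (Fin n)))
    (f : EuclideanSpace ℂ (Fin n) → ℂ) (p : EuclideanSpace ℂ (Fin n)) : Prop :=
  p ∈ frontier Ω ∧ ∀ U ∈ nhds p,
    {w : ℂ | ¬ {z | z ∈ Ω ∩ U ∧ f z = w}.Infinite}.Subsingleton

/-- The Picard property passes to limits of Picard points. -/
lemma isPicardPoint_of_mem_closure {n : ℕ} {Ω : Set (EuclideanSpace ℂ (Fin n))}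
    {f : EuclideanSpace ℂ (Fin n) → ℂ} {p : EuclideanSpace ℂ (Fin n)}
    (hp : p ∈ closure {p | IsPicardPoint Ω f p}) : IsPicardPoint Ω f p := by
  constructor
  · have : closure {p | IsPicardPoint Ω f p} ⊆ frontier Ω :=
      closure_minimal (fun q hq => hq.1) isClosed_frontier
    exact this hp
  · intro U hU
    obtain ⟨q, hqU, hqPic⟩ :=
      mem_closure_iff_nhds.mp hp (interior U) (isOpen_interior.mem_nhds
        (mem_interior_iff_mem_nhds.mpr hU))
    have hq := hqPic.2 (interior U) (isOpen_interior.mem_nhds hqU)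
    intro w hw w' hw'
    have key : ∀ v : ℂ, ¬ {z | z ∈ Ω ∩ U ∧ f z = v}.Infinite →
        ¬ {z | z ∈ Ω ∩ interior U ∧ f z = v}.Infinite := by
      intro v hv hinf
      exact hv (hinf.mono (fun z hz => ⟨⟨hz.1.1, interior_subset hz.1.2⟩, hz.2⟩))
    exact hq (key w hw) (key w' hw')

/-- if the set of Picard points of a holomorphic `f : Ω → ℂ` is dense
in ∂Ω, then every point of ∂Ω is a Picard point; indeed the set of Picard points
is closed. -/
theorem picardPoints_closed {n : ℕ} (Ω : Set (EuclideanSpace ℂ (Fin n)))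
    (hΩopen : IsOpen Ω) (hΩconn : IsConnected Ω)
    (f : EuclideanSpace ℂ (Fin n) → ℂ) (hf : DifferentiableOn ℂ f Ω)
    (hdense : frontier Ω ⊆ closure {p | IsPicardPoint Ω f p}) :
    (∀ p ∈ frontier Ω, IsPicardPoint Ω f p) ∧
      IsClosed {p | IsPicardPoint Ω f p} := by
  refine ⟨fun p hp => isPicardPoint_of_mem_closure (hdense hp), ?_⟩
  exact closure_subset_iff_isClosed.mp (fun p hp => isPicardPoint_of_mem_closure hp)
end

section
/- If F : C → M is a holomorphic map with dense image into a complex manifold M, then every negative continuous plurisubharmonic function on M is constant. -/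
open Real MeasureTheory intervalIntegral Metric

private lemma holo_circle_mean {f : ℂ → ℂ} {c : ℂ} {δ : ℝ} (hδ : 0 < δ)
    (hf : ∀ w ∈ Metric.closedBall c δ, DifferentiableAt ℂ f w) :
    ∫ θ in (0:ℝ)..(2*Real.pi), f (circleMap c δ θ) = (2*Real.pi) * f c := by
  have h := Complex.circleIntegral_sub_center_inv_smul_of_differentiable_on_off_countable hδ
      Set.countable_empty
      (fun w hw => (hf w hw).continuousAt.continuousWithinAt)
      (fun w hw => hf w (Metric.ball_subset_closedBall hw.1))
  rw [circleIntegral] at h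
  have key : ∀ θ : ℝ, deriv (circleMap c δ) θ • (circleMap c δ θ - c)⁻¹ • f (circleMap c δ θ)
      = Complex.I * f (circleMap c δ θ) := by
    intro θ
    rw [deriv_circleMap, circleMap_sub_center, smul_eq_mul, smul_eq_mul]
    have hne : circleMap 0 δ θ ≠ 0 := circleMap_ne_center hδ.ne'
    field_simp
  simp only [key] at h
  rw [intervalIntegral.integral_const_mul] at h
  have hI : (Complex.I : ℂ) ≠ 0 := Complex.I_ne_zero
  apply mul_left_cancel₀ hI
  rw [h, smul_eq_mul]; push_cast; ring

private lemma abs_pos_of_circle {c w : ℂ} {δ : ℝ} (hlt : δ < ‖c‖)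
    (hw : w ∈ Metric.closedBall c δ) : 0 < ‖w‖ := by
  rcases eq_or_ne w 0 with rfl | h
  · rw [mem_closedBall, Complex.dist_eq, zero_sub, norm_neg] at hw
    linarith
  · exact norm_pos_iff.mpr h

private lemma log_circle_mean {c : ℂ} {δ : ℝ} (hδ : 0 < δ) (hlt : δ < ‖c‖) :
    ∫ θ in (0:ℝ)..(2*Real.pi), Real.log (‖circleMap c δ θ‖)
      = (2*Real.pi) * Real.log (‖c‖) := by
  have hc0 : c ≠ 0 := by
    intro h; rw [h] at hlt; simp at hlt; linarith
  have habsc : 0 < ‖c‖ := norm_pos_iff.mpr hc0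
  set f : ℂ → ℂ := fun w => Complex.log (w / c) with hf
  have hdiff : ∀ w ∈ Metric.closedBall c δ, DifferentiableAt ℂ f w := by
    intro w hw
    have hmem : w / c ∈ Complex.slitPlane := by
      have h1 : ‖w / c - 1‖ < 1 := by
        rw [show w / c - 1 = (w - c) / c by field_simp]
        rw [norm_div]
        rw [div_lt_one habsc]
        calc ‖w - c‖ ≤ δ := by rwa [mem_closedBall, Complex.dist_eq] at hw
          _ < ‖c‖ := hlt
      left
      have := Complex.abs_re_le_norm (w / c - 1)
      have h2 : |(w / c).re - 1| < 1 := by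
        simpa [Complex.sub_re] using lt_of_le_of_lt this h1
      have := abs_lt.mp h2
      linarith [this.1]
    exact (Complex.differentiableAt_log hmem).comp w
      ((differentiableAt_id.div_const c))
  have hmean := holo_circle_mean hδ hdiff
  have hmem : ∀ θ : ℝ, circleMap c δ θ ∈ Metric.closedBall c δ := fun θ => by
    rw [mem_closedBall, Complex.dist_eq, circleMap_sub_center]
    simp [abs_of_pos hδ]
  have habspos : ∀ θ : ℝ, 0 < ‖circleMap c δ θ‖ := fun θ =>
    abs_pos_of_circle hlt (hmem θ)
  have hcont : Continuous fun θ : ℝ => f (circleMap c δ θ) := by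
    rw [continuous_iff_continuousAt]
    intro θ
    exact ((hdiff _ (hmem θ)).continuousAt).comp (continuous_circleMap c δ).continuousAt
  have hint : IntervalIntegrable (fun θ : ℝ => f (circleMap c δ θ)) volume 0 (2*Real.pi) :=
    hcont.intervalIntegrable _ _
  have hre := Complex.reCLM.intervalIntegral_comp_comm hint
  rw [hmean] at hre
  have hfc : f c = 0 := by simp [hf, div_self hc0]
  rw [hfc, mul_zero, map_zero] at hre
  have hre2 : (∫ θ in (0:ℝ)..(2*Real.pi),
      (Real.log (‖circleMap c δ θ‖) - Real.log (‖c‖))) = 0 := by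
    calc (∫ θ in (0:ℝ)..(2*Real.pi),
        (Real.log (‖circleMap c δ θ‖) - Real.log (‖c‖)))
        = ∫ x in (0:ℝ)..(2*Real.pi), Complex.reCLM (f (circleMap c δ x)) := by
          apply intervalIntegral.integral_congr
          intro θ _
          simp only [Complex.reCLM_apply, hf, Complex.log_re, norm_div]
          rw [Real.log_div (habspos θ).ne' habsc.ne']
      _ = 0 := hre
  have hcontlog : Continuous fun θ : ℝ => Real.log (‖circleMap c δ θ‖) := by
    rw [continuous_iff_continuousAt]
    intro θ
    exact ContinuousAt.log
      ((continuous_norm.comp (continuous_circleMap c δ)).continuousAt) (habspos θ).ne'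
  rw [intervalIntegral.integral_sub (hcontlog.intervalIntegrable _ _)
    (intervalIntegrable_const), intervalIntegral.integral_const, sub_eq_zero] at hre2
  rw [hre2, smul_eq_mul]
  ring

private lemma zero_of_nonneg_integral_nonpos {g : ℝ → ℝ} (hg : Continuous g)
    (h0 : ∀ θ, 0 ≤ g θ) (hper : Function.Periodic g (2*Real.pi))
    (hint : (∫ θ in (0:ℝ)..(2*Real.pi), g θ) ≤ 0) : ∀ θ, g θ = 0 := by
  by_contra hcon
  push_neg at hcon
  obtain ⟨θ0, hθ0⟩ := hcon
  have hpos0 : 0 < g θ0 := lt_of_le_of_ne (h0 θ0) (Ne.symm hθ0)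
  set θ1 := toIocMod Real.two_pi_pos 0 θ0 with hθ1def
  have hmem : θ1 ∈ Set.Ioc 0 (0 + 2*Real.pi) := toIocMod_mem_Ioc Real.two_pi_pos 0 θ0
  rw [zero_add] at hmem
  have heq : g θ1 = g θ0 := by
    have h1 : θ0 - θ1 = toIocDiv Real.two_pi_pos 0 θ0 • (2*Real.pi) :=
      self_sub_toIocMod Real.two_pi_pos 0 θ0
    have h2 : θ0 = θ1 + toIocDiv Real.two_pi_pos 0 θ0 • (2*Real.pi) := by linarith [h1]
    rw [h2, Function.Periodic.zsmul hper _ θ1]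
  have hpos1 : 0 < g θ1 := heq ▸ hpos0
  obtain ⟨δ, hδpos, hδ⟩ := Metric.continuousAt_iff.mp hg.continuousAt (g θ1 / 2) (by linarith)
  set c := max 0 (θ1 - δ/2) with hc
  have hcθ1 : c < θ1 := by
    apply max_lt hmem.1 (by linarith)
  have hc0 : 0 ≤ c := le_max_left _ _
  have hbound : ∀ x ∈ Set.Icc c θ1, g θ1 / 2 ≤ g x := by
    intro x hx
    have : dist x θ1 < δ := by
      rw [Real.dist_eq, abs_lt]
      constructor <;> [skip; linarith [hx.2]]
      have : θ1 - δ/2 ≤ c := le_max_right _ _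
      have := hx.1
      linarith
    have := hδ this
    rw [Real.dist_eq, abs_lt] at this
    linarith [this.1]
  have hint1 : ∀ a b : ℝ, IntervalIntegrable g volume a b := fun a b =>
    hg.intervalIntegrable a b
  have hsplit : (∫ θ in (0:ℝ)..(2*Real.pi), g θ)
      = (∫ θ in (0:ℝ)..c, g θ) + (∫ θ in c..θ1, g θ) + (∫ θ in θ1..(2*Real.pi), g θ) := by
    rw [intervalIntegral.integral_add_adjacent_intervals (hint1 0 c) (hint1 c θ1),
      intervalIntegral.integral_add_adjacent_intervals (hint1 0 θ1) (hint1 θ1 _)]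
  have h1 : 0 ≤ ∫ θ in (0:ℝ)..c, g θ :=
    intervalIntegral.integral_nonneg hc0 (fun x _ => h0 x)
  have h3 : 0 ≤ ∫ θ in θ1..(2*Real.pi), g θ :=
    intervalIntegral.integral_nonneg hmem.2 (fun x _ => h0 x)
  have h2 : (θ1 - c) * (g θ1 / 2) ≤ ∫ θ in c..θ1, g θ := by
    have := intervalIntegral.integral_mono_on hcθ1.le (intervalIntegrable_const) (hint1 c θ1)
      hbound
    rwa [intervalIntegral.integral_const, smul_eq_mul] at this
  have : 0 < (θ1 - c) * (g θ1 / 2) := by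
    apply mul_pos (by linarith) (by linarith)
  linarith [hsplit ▸ hint]

private lemma circleMap_arg {z0 z : ℂ} (h : z ≠ z0) :
    circleMap z0 (‖z - z0‖) (Complex.arg (z - z0)) = z := by
  rw [circleMap, Complex.norm_mul_exp_arg_mul_I]
  ring

private lemma eq_const_of_isMax {u : ℂ → ℝ} (hu : Continuous u)
    (hsub : ∀ z : ℂ, ∀ r : ℝ, 0 < r →
      u z ≤ (1/(2*Real.pi)) * ∫ θ in (0:ℝ)..(2*Real.pi), u (circleMap z r θ))
    {s : ℝ} (hle : ∀ z, u z ≤ s) {z0 : ℂ} (h0 : u z0 = s) : ∀ z, u z = s := by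
  intro z
  rcases eq_or_ne z z0 with rfl | hne
  · exact h0
  set r := ‖z - z0‖ with hrdef
  have hr : 0 < r := norm_pos_iff.mpr (sub_ne_zero.mpr hne)
  set g : ℝ → ℝ := fun θ => s - u (circleMap z0 r θ) with hgdef
  have hgc : Continuous g := continuous_const.sub (hu.comp (continuous_circleMap _ _))
  have hg0 : ∀ θ, 0 ≤ g θ := fun θ => sub_nonneg.mpr (hle _)
  have hper : Function.Periodic g (2*Real.pi) := fun θ => by
    simp only [hgdef, periodic_circleMap z0 r θ]
  have hintble : IntervalIntegrable (fun θ => u (circleMap z0 r θ)) volume 0 (2*Real.pi) :=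
    (hu.comp (continuous_circleMap _ _)).intervalIntegrable _ _
  have hint : (∫ θ in (0:ℝ)..(2*Real.pi), g θ) ≤ 0 := by
    have h1 := hsub z0 r hr
    rw [h0] at h1
    have h2 := mul_le_mul_of_nonneg_left h1 Real.two_pi_pos.le
    have h3 : (2*Real.pi) * ((1/(2*Real.pi)) *
        ∫ θ in (0:ℝ)..(2*Real.pi), u (circleMap z0 r θ))
        = ∫ θ in (0:ℝ)..(2*Real.pi), u (circleMap z0 r θ) := by
      field_simp
    rw [h3] at h2
    rw [hgdef]
    rw [intervalIntegral.integral_sub (intervalIntegrable_const) hintble,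
      intervalIntegral.integral_const, smul_eq_mul]
    linarith
  have hzero := zero_of_nonneg_integral_nonpos hgc hg0 hper hint (Complex.arg (z - z0))
  simp only [hgdef] at hzero
  rw [circleMap_arg hne] at hzero
  linarith

private lemma bound_outside {u : ℂ → ℝ} (hu : Continuous u) (hneg : ∀ z, u z < 0)
    (hsub : ∀ z : ℂ, ∀ r : ℝ, 0 < r →
      u z ≤ (1/(2*Real.pi)) * ∫ θ in (0:ℝ)..(2*Real.pi), u (circleMap z r θ))
    {M : ℝ} (hM : ∀ w : ℂ, ‖w‖ = 1 → u w ≤ M) (hMneg : M < 0)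
    {z : ℂ} (hz : 1 ≤ ‖z‖) : u z ≤ M := by
  set φ : ℂ → ℝ := fun w => Real.log (max 1 (‖w‖)) with hφdef
  have hφcont : Continuous φ := by
    rw [continuous_iff_continuousAt]
    intro w
    exact ContinuousAt.log ((continuous_const.max continuous_norm).continuousAt)
      (by positivity)
  have hφeq : ∀ w : ℂ, 1 ≤ ‖w‖ → φ w = Real.log (‖w‖) := by
    intro w hw; simp only [hφdef, max_eq_right hw]
  have hlogz : 0 ≤ Real.log (‖z‖) := Real.log_nonneg hz
  -- main estimate with ε
  have key : ∀ ε : ℝ, 0 < ε → u z ≤ M + ε * Real.log (‖z‖) := by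
    intro ε hε
    set R := max (‖z‖) (Real.exp (-M/ε)) with hRdef
    have hRz : ‖z‖ ≤ R := le_max_left _ _
    have hR1 : 1 ≤ R := le_trans hz hRz
    have hRpos : (0:ℝ) < R := lt_of_lt_of_le one_pos hR1
    have hlogR : -M ≤ ε * Real.log R := by
      have h1 : -M/ε ≤ Real.log R :=
        (Real.le_log_iff_exp_le hRpos).mpr (le_max_right _ _)
      calc -M = ε * (-M/ε) := by field_simp
        _ ≤ ε * Real.log R := by nlinarith
    set h : ℂ → ℝ := fun w => u w - ε * φ w with hhdef
    have hhcont : Continuous h := hu.sub (continuous_const.mul hφcont)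
    set K : Set ℂ := Metric.closedBall (0:ℂ) R \ Metric.ball (0:ℂ) 1 with hKdef
    have hKmem : ∀ w : ℂ, w ∈ K ↔ 1 ≤ ‖w‖ ∧ ‖w‖ ≤ R := by
      intro w
      simp only [hKdef, Set.mem_diff, mem_closedBall_zero_iff, mem_ball_zero_iff,
        not_lt]
      tauto
    have hKcl : IsClosed K := Metric.isClosed_closedBall.inter isOpen_ball.isClosed_compl
    have hKcomp : IsCompact K := (isCompact_closedBall _ _).diff isOpen_ball
    have hzK : z ∈ K := (hKmem z).mpr ⟨hz, hRz⟩
    obtain ⟨w', hw'K, hw'max⟩ := hKcomp.exists_isMaxOn ⟨z, hzK⟩ hhcont.continuousOn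
    set cmax := h w' with hcmaxdef
    have hhle : ∀ w ∈ K, h w ≤ cmax := fun w hw => hw'max hw
    set T : Set ℂ := K ∩ h ⁻¹' (Set.Ici cmax) with hTdef
    have hTcl : IsClosed T := hKcl.inter (isClosed_Ici.preimage hhcont)
    have hTcomp : IsCompact T := hKcomp.of_isClosed_subset hTcl Set.inter_subset_left
    have hTne : T.Nonempty := ⟨w', hw'K, Set.mem_preimage.mpr (Set.mem_Ici.mpr le_rfl)⟩
    obtain ⟨w0, hw0T, hw0max⟩ := hTcomp.exists_isMaxOn hTne continuous_norm.continuousOn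
    have hw0K : w0 ∈ K := hw0T.1
    have hw0c : h w0 = cmax := le_antisymm (hhle w0 hw0K) hw0T.2
    have hw0abs := (hKmem w0).mp hw0K
    -- w0 cannot be in the interior of the annulus
    have hnotint : ¬ (1 < ‖w0‖ ∧ ‖w0‖ < R) := by
      rintro ⟨hgt, hlt⟩
      set a0 := ‖w0‖ with ha0
      set δ := min (a0 - 1) (R - a0) with hδdef
      have hδpos : 0 < δ := lt_min (by linarith) (by linarith)
      have hδ1 : δ ≤ a0 - 1 := min_le_left _ _
      have hδ2 : δ ≤ R - a0 := min_le_right _ _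
      have hδlt : δ < a0 := by linarith
      have habs_cm : ∀ θ : ℝ, ‖circleMap w0 δ θ - w0‖ = δ := by
        intro θ
        rw [circleMap_sub_center, norm_circleMap_zero, abs_of_pos hδpos]
      have hcm_bounds : ∀ θ : ℝ, 1 ≤ ‖circleMap w0 δ θ‖ ∧
          ‖circleMap w0 δ θ‖ ≤ R := by
        intro θ
        have e1 : w0 + (circleMap w0 δ θ - w0) = circleMap w0 δ θ := by ring
        have h1 : ‖circleMap w0 δ θ‖ ≤ a0 + δ := by
          have := norm_add_le w0 (circleMap w0 δ θ - w0)
          rw [e1, habs_cm θ] at this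
          exact this
        have e2 : circleMap w0 δ θ + (w0 - circleMap w0 δ θ) = w0 := by ring
        have h2 : a0 - δ ≤ ‖circleMap w0 δ θ‖ := by
          have h3 := norm_add_le (circleMap w0 δ θ) (w0 - circleMap w0 δ θ)
          rw [e2] at h3
          have h4 : ‖w0 - circleMap w0 δ θ‖ = δ := by
            rw [← norm_neg (w0 - circleMap w0 δ θ), neg_sub, habs_cm θ]
          rw [h4] at h3
          linarith
        exact ⟨by linarith, by linarith⟩
      have hcmK : ∀ θ : ℝ, circleMap w0 δ θ ∈ K := fun θ => (hKmem _).mpr (hcm_bounds θ)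
      -- the mean-value inequality for h on this circle
      have hintu : IntervalIntegrable (fun θ => u (circleMap w0 δ θ)) volume 0 (2*Real.pi) :=
        (hu.comp (continuous_circleMap _ _)).intervalIntegrable _ _
      have hintφ : IntervalIntegrable (fun θ => φ (circleMap w0 δ θ)) volume 0 (2*Real.pi) :=
        (hφcont.comp (continuous_circleMap _ _)).intervalIntegrable _ _
      have hmeanu : (2*Real.pi) * u w0 ≤ ∫ θ in (0:ℝ)..(2*Real.pi), u (circleMap w0 δ θ) := by
        have h1 := hsub w0 δ hδpos
        have h2 := mul_le_mul_of_nonneg_left h1 Real.two_pi_pos.le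
        have h3 : (2*Real.pi) * ((1/(2*Real.pi)) *
            ∫ θ in (0:ℝ)..(2*Real.pi), u (circleMap w0 δ θ))
            = ∫ θ in (0:ℝ)..(2*Real.pi), u (circleMap w0 δ θ) := by field_simp
        rw [h3] at h2
        exact h2
      have hmeanφ : (∫ θ in (0:ℝ)..(2*Real.pi), φ (circleMap w0 δ θ))
          = (2*Real.pi) * φ w0 := by
        have h1 : (∫ θ in (0:ℝ)..(2*Real.pi), φ (circleMap w0 δ θ))
            = ∫ θ in (0:ℝ)..(2*Real.pi), Real.log (‖circleMap w0 δ θ‖) := by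
          apply intervalIntegral.integral_congr
          intro θ _
          exact hφeq _ (hcm_bounds θ).1
        rw [h1, log_circle_mean hδpos hδlt, hφeq w0 hw0abs.1]
      set g : ℝ → ℝ := fun θ => cmax - h (circleMap w0 δ θ) with hgdef
      have hgc : Continuous g := continuous_const.sub (hhcont.comp (continuous_circleMap _ _))
      have hg0 : ∀ θ, 0 ≤ g θ := fun θ => sub_nonneg.mpr (hhle _ (hcmK θ))
      have hper : Function.Periodic g (2*Real.pi) := fun θ => by
        simp only [hgdef, periodic_circleMap w0 δ θ]
      have hint : (∫ θ in (0:ℝ)..(2*Real.pi), g θ) ≤ 0 := by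
        have hsplit : (∫ θ in (0:ℝ)..(2*Real.pi), g θ)
            = (2*Real.pi) * cmax - ((∫ θ in (0:ℝ)..(2*Real.pi), u (circleMap w0 δ θ))
              - ε * ∫ θ in (0:ℝ)..(2*Real.pi), φ (circleMap w0 δ θ)) := by
          rw [hgdef]
          simp only [hhdef]
          rw [intervalIntegral.integral_sub intervalIntegrable_const
            ((hintu.sub (hintφ.const_mul ε))),
            intervalIntegral.integral_const, smul_eq_mul,
            intervalIntegral.integral_sub hintu (hintφ.const_mul ε),
            intervalIntegral.integral_const_mul]
          ring
        rw [hsplit, hmeanφ]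
        have hcm2 : cmax = u w0 - ε * φ w0 := hw0c.symm
        rw [hcm2]
        nlinarith [hmeanu]
      have hzero := zero_of_nonneg_integral_nonpos hgc hg0 hper hint (Complex.arg w0)
      -- the outward point
      have ha0pos : 0 < a0 := lt_trans one_pos hgt
      have hw0ne : w0 ≠ 0 := by
        intro hh0
        have hz0 : a0 = 0 := by rw [ha0, hh0]; simp
        linarith
      have hw1 : circleMap w0 δ (Complex.arg w0) = ((1 + δ / a0 : ℝ) : ℂ) * w0 := by
        rw [circleMap]
        have hmul := Complex.norm_mul_exp_arg_mul_I w0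
        have hexp : Complex.exp (Complex.arg w0 * Complex.I) = w0 / (a0 : ℂ) := by
          rw [eq_div_iff (by exact_mod_cast ha0pos.ne')]
          rw [mul_comm]
          exact hmul
        rw [hexp]
        have : (a0 : ℂ) ≠ 0 := by exact_mod_cast ha0pos.ne'
        push_cast
        ring
      have habsw1 : ‖circleMap w0 δ (Complex.arg w0)‖ = a0 + δ := by
        rw [hw1, norm_mul, Complex.norm_real, Real.norm_eq_abs, abs_of_pos (by positivity)]
        field_simp
        exact ha0.symm
      have hw1K : circleMap w0 δ (Complex.arg w0) ∈ K := hcmK _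
      have hw1T : circleMap w0 δ (Complex.arg w0) ∈ T := by
        refine ⟨hw1K, ?_⟩
        simp only [Set.mem_preimage, Set.mem_Ici]
        have : g (Complex.arg w0) = 0 := hzero
        simp only [hgdef] at this
        linarith
      have h5 : ‖circleMap w0 δ (Complex.arg w0)‖ ≤ ‖w0‖ := hw0max hw1T
      rw [habsw1, ← ha0] at h5
      linarith
    -- so |w0| = 1 or |w0| = R, in both cases cmax ≤ M
    have hcmaxM : cmax ≤ M := by
      rcases (lt_or_eq_of_le hw0abs.1).symm with h1 | h1
      · -- |w0| = 1
        rw [← hw0c]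
        simp only [hhdef]
        have : φ w0 = 0 := by rw [hφeq w0 hw0abs.1, ← h1, Real.log_one]
        simp only [this, mul_zero, sub_zero]
        exact hM w0 h1.symm
      · rcases (lt_or_eq_of_le hw0abs.2) with h2 | h2
        · exact absurd ⟨h1, h2⟩ hnotint
        · -- |w0| = R
          rw [← hw0c]
          simp only [hhdef]
          have : φ w0 = Real.log R := by rw [hφeq w0 hw0abs.1, h2]
          rw [this]
          have := hneg w0
          linarith
    have hfin : h z ≤ M := le_trans (hhle z hzK) hcmaxM
    rw [hhdef] at hfin
    simp only at hfin
    rw [hφeq z hz] at hfin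
    linarith
  -- let ε → 0
  apply le_of_forall_pos_le_add
  intro ε' hε'
  have hεpos : 0 < ε' / (Real.log (‖z‖) + 1) := by positivity
  have := key _ hεpos
  have hfrac : ε' / (Real.log (‖z‖) + 1) * Real.log (‖z‖) ≤ ε' := by
    rw [div_mul_eq_mul_div, div_le_iff₀ (by linarith)]
    nlinarith
  linarith

open scoped Manifold

/-- A real-valued function on ℂ is subharmonic if it is upper semicontinuous and
satisfies the sub-mean-value inequality on circles. -/
def SubharmonicFun (u : ℂ → ℝ) : Prop :=
  UpperSemicontinuous u ∧ ∀ z : ℂ, ∀ r : ℝ, 0 < r →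
    u z ≤ (1 / (2 * Real.pi)) *
      ∫ θ in (0 : ℝ)..(2 * Real.pi), u (z + (r : ℂ) * Complex.exp ((θ : ℂ) * Complex.I))

/-- if `F : ℂ → M` is holomorphic with dense image, then every
negative continuous plurisubharmonic function on `M` (i.e. whose pullback under
every holomorphic map from ℂ is subharmonic) is constant. -/
theorem neg_cont_psh_constant_of_dominated_by_C {E : Type*} [NormedAddCommGroup E]
    [NormedSpace ℂ E] {M : Type*} [TopologicalSpace M] [ChartedSpace E M]
    (F : ℂ → M) (hF : MDifferentiable 𝓘(ℂ, ℂ) 𝓘(ℂ, E) F) (hdense : DenseRange F)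
    (ψ : M → ℝ) (hψcont : Continuous ψ) (hψneg : ∀ x, ψ x < 0)
    (hψpsh : ∀ g : ℂ → M, MDifferentiable 𝓘(ℂ, ℂ) 𝓘(ℂ, E) g → SubharmonicFun (ψ ∘ g)) :
    ∀ x y, ψ x = ψ y := by
  set u : ℂ → ℝ := ψ ∘ F with hudef
  have hu : Continuous u := hψcont.comp hF.continuous
  have hsub : ∀ z : ℂ, ∀ r : ℝ, 0 < r →
      u z ≤ (1/(2*Real.pi)) * ∫ θ in (0:ℝ)..(2*Real.pi), u (circleMap z r θ) := by
    intro z r hr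
    have h1 := (hψpsh F hF).2 z r hr
    simpa [circleMap, hudef] using h1
  have hneg : ∀ z, u z < 0 := fun z => hψneg (F z)
  obtain ⟨z0, hz0mem, hz0max⟩ := (isCompact_closedBall (0:ℂ) 1).exists_isMaxOn
    ⟨0, Metric.mem_closedBall_self zero_le_one⟩ hu.continuousOn
  set s := u z0 with hsdef
  have hsneg : s < 0 := hneg z0
  have hM : ∀ w : ℂ, ‖w‖ = 1 → u w ≤ s := by
    intro w hw
    exact hz0max (mem_closedBall_zero_iff.mpr
      (le_of_eq (by rw [hw])))
  have hle : ∀ z : ℂ, u z ≤ s := by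
    intro z
    rcases le_or_gt (‖z‖) 1 with h | h
    · exact hz0max (mem_closedBall_zero_iff.mpr
        (by exact h))
    · exact bound_outside hu hneg hsub hM hsneg h.le
  have hconst : ∀ z : ℂ, u z = s := eq_const_of_isMax hu hsub hle rfl
  have hψs : ∀ x : M, ψ x = s := by
    intro x
    have hclosed : IsClosed {x : M | ψ x = s} := isClosed_eq hψcont continuous_const
    have hsubset : Set.range F ⊆ {x : M | ψ x = s} := by
      rintro _ ⟨z, rfl⟩
      exact hconst z
    exact closure_minimal hsubset hclosed (hdense x)
  intro x y
  rw [hψs x, hψs y]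
end

section
/- Let M_1, M_2 be complex manifolds. There exists a holomorphic map C → M_1 × M_2 with dense image if and only if there exist holomorphic maps C^k → M_1 and C^k → M_2 with dense images for some k (equivalently: the product is dominated by C iff each factor is, granting that domination by C is equivalent to domination by some C^m). -/
open scoped Manifold

open Finset
namespace DenseCurve

variable {E : Type*} [NormedAddCommGroup E] [NormedSpace ℂ E]

noncomputable def nodeA (m : ℕ) (nw : ℝ) (d : ℕ → ℝ × E) : ℝ :=
  (1 + ∑ j ∈ range m, |(d j).1|) + 1 +
    2 ^ m * (1 + nw + ∑ l ∈ range m, ‖(d l).2‖) *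
      (1 + 2 * (1 + ∑ j ∈ range m, |(d j).1|)) ^ (m - 1) *
      ((m : ℝ) + (1 + ∑ j ∈ range m, |(d j).1|)) ^ m

noncomputable def nodeC (m : ℕ) (wm : E) (d : ℕ → ℝ × E) (r : ℝ) : E :=
  (∏ j ∈ range m, ((r : ℂ) - ((d j).1 : ℂ)))⁻¹ •
    (wm - ∑ l ∈ range m, (∏ j ∈ range l, ((r : ℂ) - ((d j).1 : ℂ))) • (d l).2)

theorem nodeA_congr {m : ℕ} {x : ℝ} {d d' : ℕ → ℝ × E} (h : ∀ j < m, d j = d' j) :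
    nodeA m x d = nodeA m x d' := by
  unfold nodeA
  rw [show (∑ j ∈ range m, |(d j).1|) = ∑ j ∈ range m, |(d' j).1| from
      Finset.sum_congr rfl (fun j hj => by rw [h j (mem_range.mp hj)]),
    show (∑ l ∈ range m, ‖(d l).2‖) = ∑ l ∈ range m, ‖(d' l).2‖ from
      Finset.sum_congr rfl (fun l hl => by rw [h l (mem_range.mp hl)])]

theorem nodeC_congr {m : ℕ} {wm : E} {r : ℝ} {d d' : ℕ → ℝ × E} (h : ∀ j < m, d j = d' j) :
    nodeC m wm d r = nodeC m wm d' r := by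
  unfold nodeC
  rw [show (∏ j ∈ range m, ((r : ℂ) - ((d j).1 : ℂ)))
        = ∏ j ∈ range m, ((r : ℂ) - ((d' j).1 : ℂ)) from
      Finset.prod_congr rfl (fun j hj => by rw [h j (mem_range.mp hj)]),
    show (∑ l ∈ range m, (∏ j ∈ range l, ((r : ℂ) - ((d j).1 : ℂ))) • (d l).2)
        = ∑ l ∈ range m, (∏ j ∈ range l, ((r : ℂ) - ((d' j).1 : ℂ))) • (d' l).2 from
      Finset.sum_congr rfl (fun l hl => by
        rw [h l (mem_range.mp hl),
          Finset.prod_congr rfl (fun j hj => by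
            rw [h j ((mem_range.mp hj).trans (mem_range.mp hl))])])]

noncomputable def nodeData (w : ℕ → E) : ℕ → ℝ × E := fun m =>
  let d : ℕ → ℝ × E := fun j => if _ : j < m then nodeData w j else 0
  (nodeA m ‖w m‖ d, nodeC m (w m) d (nodeA m ‖w m‖ d))
  termination_by m => m

noncomputable def node (w : ℕ → E) (m : ℕ) : ℝ := (nodeData w m).1

noncomputable def coeff (w : ℕ → E) (m : ℕ) : E := (nodeData w m).2

theorem node_eq (w : ℕ → E) (m : ℕ) :
    node w m = nodeA m ‖w m‖ (nodeData w) := by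
  rw [node, nodeData]
  exact nodeA_congr fun j hj => dif_pos hj

theorem coeff_eq (w : ℕ → E) (m : ℕ) :
    coeff w m = nodeC m (w m) (nodeData w) (node w m) := by
  have hd : ∀ j < m, (fun j => if _ : j < m then nodeData w j else 0) j = nodeData w j :=
    fun j hj => dif_pos hj
  rw [coeff, node_eq, nodeData]
  exact (nodeC_congr hd).trans (by rw [nodeA_congr hd])

noncomputable def AB (w : ℕ → E) (m : ℕ) : ℝ := 1 + ∑ j ∈ range m, |node w j|
noncomputable def KB (w : ℕ → E) (m : ℕ) : ℝ := 1 + ‖w m‖ + ∑ l ∈ range m, ‖coeff w l‖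
noncomputable def sgap (w : ℕ → E) (m : ℕ) : ℝ :=
  2 ^ m * KB w m * (1 + 2 * AB w m) ^ (m - 1) * ((m : ℝ) + AB w m) ^ m

theorem node_eq' (w : ℕ → E) (m : ℕ) : node w m = AB w m + 1 + sgap w m := by
  rw [node_eq]; rfl

theorem one_le_AB (w : ℕ → E) (m : ℕ) : 1 ≤ AB w m :=
  le_add_of_nonneg_right (Finset.sum_nonneg fun j _ => abs_nonneg _)

theorem one_le_KB (w : ℕ → E) (m : ℕ) : 1 ≤ KB w m := by
  have h1 : (0:ℝ) ≤ ‖w m‖ := norm_nonneg _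
  have h2 : (0:ℝ) ≤ ∑ l ∈ range m, ‖coeff w l‖ := Finset.sum_nonneg fun l _ => norm_nonneg _
  unfold KB; linarith

theorem sgap_pos (w : ℕ → E) (m : ℕ) : 0 < sgap w m := by
  have h1 := one_le_KB w m
  have h2 := one_le_AB w m
  have h3 : (0:ℝ) ≤ (m:ℝ) := Nat.cast_nonneg m
  unfold sgap
  have : (0:ℝ) < 2 ^ m := by positivity
  apply mul_pos (mul_pos (mul_pos this (by linarith)) (by positivity)) (by positivity)

theorem AB_mono (w : ℕ → E) {l m : ℕ} (h : l ≤ m) : AB w l ≤ AB w m := by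
  unfold AB
  have := Finset.sum_le_sum_of_subset_of_nonneg (Finset.range_subset_range.mpr h)
    (fun j _ _ => abs_nonneg (node w j))
  linarith

theorem abs_node_le (w : ℕ → E) {j m : ℕ} (h : j < m) : |node w j| ≤ AB w m - 1 := by
  have := Finset.single_le_sum (f := fun j => |node w j|)
    (fun i _ => abs_nonneg _) (Finset.mem_range.mpr h)
  unfold AB; linarith

theorem node_gap (w : ℕ → E) {j m : ℕ} (h : j < m) :
    sgap w m + 2 ≤ node w m - node w j := by
  have h1 := abs_node_le w h
  have h2 : node w j ≤ |node w j| := le_abs_self _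
  have h3 := node_eq' w m
  linarith

theorem node_pos (w : ℕ → E) (m : ℕ) : 0 < node w m := by
  have := node_eq' w m; have := one_le_AB w m; have := sgap_pos w m; linarith

noncomputable def Pfun (w : ℕ → E) (m : ℕ) (t : ℂ) : ℂ :=
  ∏ j ∈ range m, (t - (node w j : ℂ))

theorem norm_Pfun_le (w : ℕ → E) {l m : ℕ} (hlm : l ≤ m) {r : ℝ} {t : ℂ} (ht : ‖t‖ ≤ r) :
    ‖Pfun w l t‖ ≤ (r + AB w m) ^ l := by
  rw [Pfun, norm_prod]
  have hr : (0:ℝ) ≤ r := le_trans (norm_nonneg t) ht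
  calc ∏ j ∈ range l, ‖t - (node w j : ℂ)‖
      ≤ ∏ _j ∈ range l, (r + AB w m) := by
        apply Finset.prod_le_prod (fun j _ => norm_nonneg _)
        intro j hj
        have h1 : ‖t - (node w j : ℂ)‖ ≤ ‖t‖ + ‖((node w j : ℝ) : ℂ)‖ := norm_sub_le _ _
        have h2 : ‖((node w j : ℝ) : ℂ)‖ = |node w j| := Complex.norm_real _
        have h3 : |node w j| ≤ AB w l - 1 := abs_node_le w (mem_range.mp hj)
        have h4 : AB w l ≤ AB w m := AB_mono w hlm
        linarith
    _ = (r + AB w m) ^ l := by rw [Finset.prod_const, Finset.card_range]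

theorem Pfun_node_norm (w : ℕ → E) (m : ℕ) :
    ‖Pfun w m (node w m)‖ = ∏ j ∈ range m, (node w m - node w j) := by
  rw [Pfun, norm_prod]
  apply Finset.prod_congr rfl
  intro j hj
  have h1 : ((node w m : ℝ) : ℂ) - ((node w j : ℝ) : ℂ) = ((node w m - node w j : ℝ) : ℂ) := by
    push_cast; ring
  rw [h1, Complex.norm_real]
  refine Real.norm_of_nonneg ?_
  have := node_gap w (mem_range.mp hj); have := sgap_pos w m; linarith

theorem norm_Pfun_node_ge (w : ℕ → E) (m : ℕ) :
    (1 + sgap w m) ^ m ≤ ‖Pfun w m (node w m)‖ := by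
  rw [Pfun_node_norm]
  calc (1 + sgap w m) ^ m = ∏ _j ∈ range m, (1 + sgap w m) := by
        rw [Finset.prod_const, Finset.card_range]
    _ ≤ ∏ j ∈ range m, (node w m - node w j) := by
        apply Finset.prod_le_prod
        · intro j _; have := sgap_pos w m; linarith
        · intro j hj; have := node_gap w (mem_range.mp hj); linarith

theorem Pfun_node_ne (w : ℕ → E) (m : ℕ) : Pfun w m (node w m) ≠ 0 := by
  have h1 := norm_Pfun_node_ge w m
  have h2 : (0:ℝ) < (1 + sgap w m) ^ m := by
    have := sgap_pos w m; positivity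
  intro h; rw [h, norm_zero] at h1; linarith


theorem norm_coeff_le (w : ℕ → E) (m : ℕ) :
    ‖coeff w m‖ ≤ KB w m * (node w m + AB w m) ^ (m - 1) / (1 + sgap w m) ^ m := by
  have hsg := sgap_pos w m
  have hS : (0:ℝ) < (1 + sgap w m) ^ m := by positivity
  have hP := norm_Pfun_node_ge w m
  have hPpos : (0:ℝ) < ‖Pfun w m ((node w m : ℝ) : ℂ)‖ := lt_of_lt_of_le hS hP
  have hX : (1:ℝ) ≤ node w m + AB w m := by
    have := node_pos w m; have := one_le_AB w m; linarith
  have hXp1 : (1:ℝ) ≤ (node w m + AB w m) ^ (m - 1) := one_le_pow₀ hX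
  have hnorm : ‖((node w m : ℝ) : ℂ)‖ ≤ node w m := by
    rw [Complex.norm_real]
    exact le_of_eq (Real.norm_of_nonneg (le_of_lt (node_pos w m)))
  have hsum : ‖∑ l ∈ range m, Pfun w l ((node w m : ℝ) : ℂ) • coeff w l‖
      ≤ (node w m + AB w m) ^ (m - 1) * ∑ l ∈ range m, ‖coeff w l‖ := by
    calc ‖∑ l ∈ range m, Pfun w l ((node w m : ℝ) : ℂ) • coeff w l‖
        ≤ ∑ l ∈ range m, ‖Pfun w l ((node w m : ℝ) : ℂ) • coeff w l‖ := norm_sum_le _ _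
      _ ≤ ∑ l ∈ range m, (node w m + AB w m) ^ (m - 1) * ‖coeff w l‖ := by
          apply Finset.sum_le_sum
          intro l hl
          rw [norm_smul]
          have h1 : ‖Pfun w l ((node w m : ℝ) : ℂ)‖ ≤ (node w m + AB w m) ^ l :=
            norm_Pfun_le w (le_of_lt (mem_range.mp hl)) hnorm
          have h2 : (node w m + AB w m) ^ l ≤ (node w m + AB w m) ^ (m - 1) :=
            pow_le_pow_right₀ hX (Nat.le_pred_of_lt (mem_range.mp hl))
          exact mul_le_mul (h1.trans h2) le_rfl (norm_nonneg _) (by positivity)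
      _ = (node w m + AB w m) ^ (m - 1) * ∑ l ∈ range m, ‖coeff w l‖ := by
          rw [Finset.mul_sum]
  have hc : coeff w m = (Pfun w m ((node w m : ℝ) : ℂ))⁻¹ •
      (w m - ∑ l ∈ range m, Pfun w l ((node w m : ℝ) : ℂ) • coeff w l) := coeff_eq w m
  rw [hc, norm_smul, norm_inv]
  have hwm : ‖w m - ∑ l ∈ range m, Pfun w l ((node w m : ℝ) : ℂ) • coeff w l‖
      ≤ (node w m + AB w m) ^ (m - 1) * KB w m := by
    have h2 := norm_sub_le (w m) (∑ l ∈ range m, Pfun w l ((node w m : ℝ) : ℂ) • coeff w l)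
    have h3 : (0:ℝ) ≤ ∑ l ∈ range m, ‖coeff w l‖ :=
      Finset.sum_nonneg fun l _ => norm_nonneg _
    have h4 : (0:ℝ) ≤ ‖w m‖ := norm_nonneg _
    have h5 : KB w m = 1 + ‖w m‖ + ∑ l ∈ range m, ‖coeff w l‖ := rfl
    nlinarith [hsum]
  calc ‖Pfun w m ((node w m : ℝ) : ℂ)‖⁻¹ *
        ‖w m - ∑ l ∈ range m, Pfun w l ((node w m : ℝ) : ℂ) • coeff w l‖
      ≤ ((1 + sgap w m) ^ m)⁻¹ * ((node w m + AB w m) ^ (m - 1) * KB w m) :=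
        mul_le_mul (inv_anti₀ hS hP) hwm (norm_nonneg _) (by positivity)
    _ = KB w m * (node w m + AB w m) ^ (m - 1) / (1 + sgap w m) ^ m := by
        field_simp

theorem key_bound (w : ℕ → E) {m : ℕ} (hm : 1 ≤ m) :
    ((m : ℝ) + AB w m) ^ m * ‖coeff w m‖ ≤ (1 / 2) ^ m := by
  obtain ⟨n, rfl⟩ : ∃ n, m = n + 1 := ⟨m - 1, (Nat.succ_pred_eq_of_pos hm).symm⟩
  have hmn : n + 1 - 1 = n := rfl
  have hA := one_le_AB w (n + 1)
  have hK := one_le_KB w (n + 1)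
  have hsg := sgap_pos w (n + 1)
  have hS1 : (1:ℝ) ≤ 1 + sgap w (n + 1) := by linarith
  have hN1 : (1:ℝ) ≤ ((n + 1 : ℕ) : ℝ) + AB w (n + 1) := by
    have : (0:ℝ) ≤ ((n + 1 : ℕ) : ℝ) := Nat.cast_nonneg _
    linarith
  have hXS : node w (n + 1) + AB w (n + 1) ≤ (1 + sgap w (n + 1)) * (1 + 2 * AB w (n + 1)) := by
    have h1 := node_eq' w (n + 1)
    nlinarith
  have hX0 : (0:ℝ) ≤ node w (n + 1) + AB w (n + 1) := by
    have := node_pos w (n + 1); linarith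
  have hc1 := norm_coeff_le w (n + 1)
  rw [hmn] at hc1
  have hc2 : ‖coeff w (n + 1)‖ ≤
      KB w (n + 1) * (1 + 2 * AB w (n + 1)) ^ n / (1 + sgap w (n + 1)) := by
    have h2 : (node w (n + 1) + AB w (n + 1)) ^ n
        ≤ ((1 + sgap w (n + 1)) * (1 + 2 * AB w (n + 1))) ^ n :=
      pow_le_pow_left₀ hX0 hXS n
    have h3 : KB w (n + 1) * (node w (n + 1) + AB w (n + 1)) ^ n / (1 + sgap w (n + 1)) ^ (n + 1)
        ≤ KB w (n + 1) * ((1 + sgap w (n + 1)) * (1 + 2 * AB w (n + 1))) ^ n /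
          (1 + sgap w (n + 1)) ^ (n + 1) := by
      gcongr
    refine hc1.trans (h3.trans (le_of_eq ?_))
    rw [mul_pow, pow_succ]
    field_simp
  have hD : (0:ℝ) < 2 ^ (n + 1) * KB w (n + 1) * (1 + 2 * AB w (n + 1)) ^ n *
      (((n + 1 : ℕ) : ℝ) + AB w (n + 1)) ^ (n + 1) := by positivity
  have hSD : 2 ^ (n + 1) * KB w (n + 1) * (1 + 2 * AB w (n + 1)) ^ n *
      (((n + 1 : ℕ) : ℝ) + AB w (n + 1)) ^ (n + 1) ≤ 1 + sgap w (n + 1) := by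
    have : sgap w (n + 1) = 2 ^ (n + 1) * KB w (n + 1) * (1 + 2 * AB w (n + 1)) ^ (n + 1 - 1) *
        (((n + 1 : ℕ) : ℝ) + AB w (n + 1)) ^ (n + 1) := rfl
    rw [hmn] at this
    linarith
  calc (((n + 1 : ℕ) : ℝ) + AB w (n + 1)) ^ (n + 1) * ‖coeff w (n + 1)‖
      ≤ (((n + 1 : ℕ) : ℝ) + AB w (n + 1)) ^ (n + 1) *
        (KB w (n + 1) * (1 + 2 * AB w (n + 1)) ^ n / (1 + sgap w (n + 1))) := by
        gcongr
    _ ≤ (((n + 1 : ℕ) : ℝ) + AB w (n + 1)) ^ (n + 1) *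
        (KB w (n + 1) * (1 + 2 * AB w (n + 1)) ^ n /
          (2 ^ (n + 1) * KB w (n + 1) * (1 + 2 * AB w (n + 1)) ^ n *
            (((n + 1 : ℕ) : ℝ) + AB w (n + 1)) ^ (n + 1))) := by
        gcongr
    _ = (1 / 2) ^ (n + 1) := by
        rw [div_pow, one_pow]
        field_simp


/-- The interpolating entire curve. -/
noncomputable def interp (w : ℕ → E) (t : ℂ) : E := ∑' m, Pfun w m t • coeff w m

theorem interp_node (w : ℕ → E) (m : ℕ) : interp w ((node w m : ℝ) : ℂ) = w m := by
  rw [interp, tsum_eq_sum (s := Finset.range (m + 1))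
    (fun l hl => by
      have hml : m < l := by
        by_contra h
        exact hl (Finset.mem_range.mpr (Nat.lt_succ_of_le (le_of_not_gt h)))
      have hP0 : Pfun w l ((node w m : ℝ) : ℂ) = 0 :=
        Finset.prod_eq_zero (Finset.mem_range.mpr hml) (sub_self _)
      rw [hP0, zero_smul]),
    Finset.sum_range_succ]
  have hc : Pfun w m ((node w m : ℝ) : ℂ) • coeff w m
      = w m - ∑ l ∈ range m, Pfun w l ((node w m : ℝ) : ℂ) • coeff w l := by
    have h1 : coeff w m = (Pfun w m ((node w m : ℝ) : ℂ))⁻¹ •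
        (w m - ∑ l ∈ range m, Pfun w l ((node w m : ℝ) : ℂ) • coeff w l) := coeff_eq w m
    rw [h1, smul_smul, mul_inv_cancel₀ (Pfun_node_ne w m), one_smul]
  rw [hc]
  abel

theorem interp_entire [CompleteSpace E] (w : ℕ → E) : Differentiable ℂ (interp w) := by
  intro z
  set N : ℕ := ⌈‖z‖⌉₊ + 1 with hN
  have hz : z ∈ Metric.ball (0 : ℂ) N := by
    rw [mem_ball_zero_iff]
    calc ‖z‖ ≤ (⌈‖z‖⌉₊ : ℝ) := Nat.le_ceil _
      _ < (N : ℝ) := by rw [hN]; push_cast; linarith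
  have hdiff : DifferentiableOn ℂ (interp w) (Metric.ball (0 : ℂ) N) := by
    have hN0 : (0:ℝ) ≤ (N : ℝ) := Nat.cast_nonneg N
    have hAB : ∀ m : ℕ, (0:ℝ) ≤ (N : ℝ) + AB w m := fun m => by
      have := one_le_AB w m; linarith
    have hsum : Summable (fun m => ((N : ℝ) + AB w m) ^ m * ‖coeff w m‖) := by
      rw [← summable_nat_add_iff (N + 1)]
      refine Summable.of_nonneg_of_le
        (fun n => mul_nonneg (pow_nonneg (hAB _) _) (norm_nonneg _)) (fun n => ?_)
        ((summable_geometric_two.mul_right ((1 / 2 : ℝ) ^ (N + 1))).congr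
          (fun n => (pow_add (1 / 2 : ℝ) n (N + 1)).symm))
      · skip
        have hm1 : 1 ≤ n + (N + 1) := by omega
        have hNm : (N : ℝ) ≤ ((n + (N + 1) : ℕ) : ℝ) := by push_cast; linarith [Nat.cast_nonneg (α := ℝ) n]
        have h1 : ((N : ℝ) + AB w (n + (N + 1))) ^ (n + (N + 1))
            ≤ (((n + (N + 1) : ℕ) : ℝ) + AB w (n + (N + 1))) ^ (n + (N + 1)) := by
          apply pow_le_pow_left₀ (by have := one_le_AB w (n + (N + 1)); positivity)
          linarith
        calc ((N : ℝ) + AB w (n + (N + 1))) ^ (n + (N + 1)) * ‖coeff w (n + (N + 1))‖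
            ≤ (((n + (N + 1) : ℕ) : ℝ) + AB w (n + (N + 1))) ^ (n + (N + 1)) *
              ‖coeff w (n + (N + 1))‖ := by gcongr
          _ ≤ (1 / 2) ^ (n + (N + 1)) := key_bound w hm1
    apply Complex.differentiableOn_tsum_of_summable_norm hsum ?_ Metric.isOpen_ball ?_
    · intro i
      apply Differentiable.differentiableOn
      apply Differentiable.smul_const
      exact Differentiable.fun_finsetProd fun j _ => differentiable_id.sub_const _
    · intro i t ht
      rw [norm_smul]
      exact mul_le_mul (norm_Pfun_le w le_rfl (le_of_lt (mem_ball_zero_iff.mp ht)))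
        le_rfl (norm_nonneg _) (pow_nonneg (hAB i) i)
  exact hdiff.differentiableAt (Metric.isOpen_ball.mem_nhds hz)

theorem interp_mem_range (w : ℕ → E) (m : ℕ) : w m ∈ Set.range (interp w) :=
  ⟨((node w m : ℝ) : ℂ), interp_node w m⟩

/-- Every separable complete complex normed space admits a dense entire curve. -/
theorem exists_dense_entire (E : Type*) [NormedAddCommGroup E] [NormedSpace ℂ E]
    [CompleteSpace E] [TopologicalSpace.SeparableSpace E] :
    ∃ g : ℂ → E, Differentiable ℂ g ∧ DenseRange g := by
  have : Nonempty E := ⟨0⟩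
  obtain ⟨w, hw⟩ := TopologicalSpace.exists_dense_seq E
  refine ⟨interp w, interp_entire w, hw.mono ?_⟩
  rintro x ⟨m, rfl⟩
  exact interp_mem_range w m

end DenseCurve

/-- a product `M₁ × M₂` of complex manifolds is dominated by ℂ if
and only if, for some `k`, both factors are dominated by ℂᵏ. -/
theorem product_dominated_iff {E₁ E₂ : Type*} [NormedAddCommGroup E₁]
    [NormedSpace ℂ E₁] [NormedAddCommGroup E₂] [NormedSpace ℂ E₂]
    {M₁ M₂ : Type*} [TopologicalSpace M₁] [ChartedSpace E₁ M₁]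
    [TopologicalSpace M₂] [ChartedSpace E₂ M₂] :
    (∃ F : ℂ → M₁ × M₂,
        MDifferentiable 𝓘(ℂ, ℂ) (𝓘(ℂ, E₁).prod 𝓘(ℂ, E₂)) F ∧ DenseRange F) ↔
      (∃ k : ℕ,
        (∃ F₁ : EuclideanSpace ℂ (Fin k) → M₁,
            MDifferentiable 𝓘(ℂ, EuclideanSpace ℂ (Fin k)) 𝓘(ℂ, E₁) F₁ ∧
              DenseRange F₁) ∧
        (∃ F₂ : EuclideanSpace ℂ (Fin k) → M₂,
            MDifferentiable 𝓘(ℂ, EuclideanSpace ℂ (Fin k)) 𝓘(ℂ, E₂) F₂ ∧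
              DenseRange F₂)) := by
  constructor
  · rintro ⟨F, hF, hFd⟩
    haveI : Nonempty M₁ := ⟨(F 0).1⟩
    haveI : Nonempty M₂ := ⟨(F 0).2⟩
    have he : Differentiable ℂ (fun x : EuclideanSpace ℂ (Fin 1) => x 0) :=
      (EuclideanSpace.proj (𝕜 := ℂ) (0 : Fin 1)).differentiable
    have hes : Function.Surjective (fun x : EuclideanSpace ℂ (Fin 1) => x 0) :=
      fun z => ⟨WithLp.toLp 2 (fun _ => z), rfl⟩
    have heM : MDifferentiable 𝓘(ℂ, EuclideanSpace ℂ (Fin 1)) 𝓘(ℂ, ℂ)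
        (fun x : EuclideanSpace ℂ (Fin 1) => x 0) := he.mdifferentiable
    have hFe : MDifferentiable 𝓘(ℂ, EuclideanSpace ℂ (Fin 1)) (𝓘(ℂ, E₁).prod 𝓘(ℂ, E₂))
        (fun x : EuclideanSpace ℂ (Fin 1) => F (x 0)) := hF.comp heM
    have hFed : DenseRange (fun x : EuclideanSpace ℂ (Fin 1) => F (x 0)) :=
      hFd.comp hes.denseRange hF.continuous
    refine ⟨1, ⟨fun x => (F (x 0)).1, hFe.fst, ?_⟩, ⟨fun x => (F (x 0)).2, hFe.snd, ?_⟩⟩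
    · exact Prod.fst_surjective.denseRange.comp hFed continuous_fst
    · exact Prod.snd_surjective.denseRange.comp hFed continuous_snd
  · rintro ⟨k, ⟨F₁, hF₁, hd₁⟩, ⟨F₂, hF₂, hd₂⟩⟩
    obtain ⟨g, hg, hgd⟩ := DenseCurve.exists_dense_entire
      (EuclideanSpace ℂ (Fin k) × EuclideanSpace ℂ (Fin k))
    refine ⟨fun t => (F₁ (g t).1, F₂ (g t).2), ?_, ?_⟩
    · exact (hF₁.comp (hg.fst.mdifferentiable)).prodMk (hF₂.comp (hg.snd.mdifferentiable))
    · exact (hd₁.prodMap hd₂).comp hgd (hF₁.continuous.prodMap hF₂.continuous)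
end
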